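/- arXiv:1709.07621 — 3 statements merged into one kernel-verified Lean document; each statement's English description precedes it below -/
import Mathlib

section
/- Let m ≥ 1 be an integer and let Q : ℂ^m → [0,∞) be a multi-circular function of class C² such that Q(z) ≥ (1+ε₀) log‖z‖ for all sufficiently large ‖z‖, for some fixed ε₀ > 0. Let T = (t₁,…,t_m) ∈ [0,1]^m with t₁+⋯+t_m ≤ 1. Then the integrals I_n := ∫_{ℂ^m} ∏_{j=1}^m |z_j|^{2 n t_j} e^{−2 n Q(z)} dV(z) are finite for all sufficiently large n, and lim_{n→∞} (1/(2n)) log I_n = sup_{r ∈ (0,∞)^m} ( ∑_{j=1}^m t_j log r_j − Q(r₁,…,r_m) ), this supremum being finite. -/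
open MeasureTheory Filter

open MeasureTheory Filter

namespace Stmt2
variable {m : ℕ} (Q : (Fin m → ℂ) → ℝ) (t : Fin m → ℝ)

noncomputable def g (z : Fin m → ℂ) : ℝ :=
  (∏ i, ‖z i‖ ^ (2 * t i)) * Real.exp (-2 * Q z)

lemma g_nonneg (z : Fin m → ℂ) : 0 ≤ g Q t z := by
  unfold g; positivity

lemma f_eq (n : ℕ) (z : Fin m → ℂ) :
    (∏ i, ‖z i‖ ^ (2 * (n : ℝ) * t i)) * Real.exp (-2 * n * Q z)
      = g Q t z ^ n := by
  unfold g
  rw [mul_pow, ← Finset.prod_pow]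
  congr 1
  · refine Finset.prod_congr rfl fun i _ => ?_
    rw [show 2 * (n : ℝ) * t i = 2 * t i * (n : ℝ) by ring,
      Real.rpow_mul (norm_nonneg _), Real.rpow_natCast]
  · rw [← Real.exp_nat_mul]; congr 1; ring

lemma g_cont (hQ : Continuous Q) (ht0 : ∀ i, 0 ≤ t i) : Continuous (g Q t) := by
  unfold g
  refine Continuous.mul ?_ (Real.continuous_exp.comp (by fun_prop))
  refine continuous_finset_prod _ fun i _ => ?_
  have h1 : Continuous fun x : ℝ => x ^ (2 * t i) := by
    rw [continuous_iff_continuousAt]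
    exact fun x => Real.continuousAt_rpow_const x _ (Or.inr (by nlinarith [ht0 i]))
  exact h1.comp (continuous_norm.comp (continuous_apply i))

noncomputable def E (z : Fin m → ℂ) : ℝ := Real.sqrt (∑ i, ‖z i‖ ^ 2)

lemma E_nonneg (z : Fin m → ℂ) : 0 ≤ E z := Real.sqrt_nonneg _

lemma abs_le_E (z : Fin m → ℂ) (i : Fin m) : ‖z i‖ ≤ E z := by
  rw [show ‖z i‖ = Real.sqrt (‖z i‖ ^ 2) from
    (Real.sqrt_sq (norm_nonneg _)).symm]
  exact Real.sqrt_le_sqrt (Finset.single_le_sum (f := fun j => ‖z j‖ ^ 2) (fun j _ => sq_nonneg _) (Finset.mem_univ i))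

lemma norm_le_E (z : Fin m → ℂ) : ‖z‖ ≤ E z := by
  refine (pi_norm_le_iff_of_nonneg (E_nonneg z)).mpr fun i => ?_
  simpa using abs_le_E z i

end Stmt2

namespace Stmt2
variable {m : ℕ} (Q : (Fin m → ℂ) → ℝ) (t : Fin m → ℝ)

def S : Set ℝ := {y | ∃ r : Fin m → ℝ, (∀ i, 0 < r i) ∧
  y = ∑ i, t i * Real.log (r i) - Q (fun i => (r i : ℂ))}

lemma g_eval (r : Fin m → ℝ) (hr : ∀ i, 0 < r i) :
    g Q t (fun i => (r i : ℂ))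
      = Real.exp (2 * (∑ i, t i * Real.log (r i) - Q (fun i => (r i : ℂ)))) := by
  unfold g
  have habs : ∀ i : Fin m, ‖((r i : ℂ))‖ ^ (2 * t i)
      = Real.exp (Real.log (r i) * (2 * t i)) := fun i => by
    rw [Complex.norm_real, Real.norm_eq_abs, abs_of_pos (hr i), Real.rpow_def_of_pos (hr i)]
  simp only [habs]
  rw [← Real.exp_sum, ← Real.exp_add]
  congr 1
  have h2 : ∑ i, Real.log (r i) * (2 * t i) = 2 * ∑ i, t i * Real.log (r i) := by
    rw [Finset.mul_sum]; exact Finset.sum_congr rfl fun i _ => by ring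
  rw [h2]; ring

lemma S_nonempty : (S Q t).Nonempty :=
  ⟨_, ⟨fun _ => 1, fun _ => one_pos, rfl⟩⟩

lemma S_bdd {ε₀ R : ℝ} (hε₀ : 0 < ε₀) (hQ0 : ∀ z, 0 ≤ Q z) (ht0 : ∀ i, 0 ≤ t i)
    (htsum : ∑ i, t i ≤ 1)
    (hg : ∀ z : Fin m → ℂ, R ≤ E z → (1 + ε₀) * Real.log (E z) ≤ Q z) :
    ∀ y ∈ S Q t, y ≤ Real.log (max R 1) := by
  rintro y ⟨r, hr, rfl⟩
  set zr : Fin m → ℂ := fun i => (r i : ℂ) with hzr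
  have habs : ∀ i, ‖zr i‖ = r i := fun i => by
    rw [hzr, Complex.norm_real, Real.norm_eq_abs, abs_of_pos (hr i)]
  have hre : ∀ i, r i ≤ E zr := fun i => habs i ▸ abs_le_E zr i
  set e := E zr with he
  have hR1 : (1 : ℝ) ≤ max R 1 := le_max_right _ _
  have hlogR1 : 0 ≤ Real.log (max R 1) := Real.log_nonneg hR1
  by_cases hcase : e ≤ max R 1
  · have h1 : ∑ i, t i * Real.log (r i) ≤ ∑ i, t i * Real.log (max R 1) := by
      refine Finset.sum_le_sum fun i _ => mul_le_mul_of_nonneg_left ?_ (ht0 i)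
      exact Real.log_le_log (hr i) ((hre i).trans hcase)
    have h2 : ∑ i, t i * Real.log (max R 1) = (∑ i, t i) * Real.log (max R 1) :=
      (Finset.sum_mul ..).symm
    have h3 : (∑ i, t i) * Real.log (max R 1) ≤ 1 * Real.log (max R 1) :=
      mul_le_mul_of_nonneg_right htsum hlogR1
    have := hQ0 (fun i => (r i : ℂ))
    nlinarith [h1, h2, h3]
  · push_neg at hcase
    have hRe : R ≤ e := (le_max_left R 1).trans hcase.le
    have h1e : (1 : ℝ) ≤ e := hR1.trans hcase.le
    have hloge : 0 ≤ Real.log e := Real.log_nonneg h1e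
    have hQge : (1 + ε₀) * Real.log e ≤ Q (fun i => (r i : ℂ)) := hg zr hRe
    have h1 : ∑ i, t i * Real.log (r i) ≤ ∑ i, t i * Real.log e := by
      refine Finset.sum_le_sum fun i _ => mul_le_mul_of_nonneg_left ?_ (ht0 i)
      exact Real.log_le_log (hr i) (hre i)
    have h2 : ∑ i, t i * Real.log e = (∑ i, t i) * Real.log e := (Finset.sum_mul ..).symm
    have h3 : (∑ i, t i) * Real.log e ≤ 1 * Real.log e :=
      mul_le_mul_of_nonneg_right htsum hloge
    nlinarith [h1, h2, h3]

lemma g_le (hQc : Continuous Q) (ht0 : ∀ i, 0 ≤ t i)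
    (hcirc : ∀ z : Fin m → ℂ, Q z = Q (fun i => (‖z i‖ : ℂ)))
    {L : ℝ} (hL : ∀ y ∈ S Q t, y ≤ L) (z : Fin m → ℂ) :
    g Q t z ≤ Real.exp (2 * L) := by
  set D : Set (Fin m → ℂ) := Set.pi Set.univ (fun _ => ({0}ᶜ : Set ℂ)) with hD
  have hdense : Dense D := dense_pi Set.univ (fun i _ => dense_compl_singleton 0)
  have honD : ∀ x ∈ D, g Q t x ≤ (fun _ : Fin m → ℂ => Real.exp (2 * L)) x := by
    intro x hx
    have hne : ∀ i, x i ≠ 0 := fun i => hx i (Set.mem_univ i)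
    set r : Fin m → ℝ := fun i => ‖x i‖ with hrdef
    have hr : ∀ i, 0 < r i := fun i => norm_pos_iff.mpr (hne i)
    have hxg : g Q t x = g Q t (fun i => (r i : ℂ)) := by
      unfold g
      congr 1
      · refine Finset.prod_congr rfl fun i _ => ?_
        rw [hrdef, Complex.norm_real, norm_norm]
      · rw [hcirc x]
    rw [hxg, g_eval Q t r hr]
    have hmem : (∑ i, t i * Real.log (r i) - Q (fun i => (r i : ℂ))) ∈ S Q t :=
      ⟨r, hr, rfl⟩
    exact Real.exp_le_exp.mpr (by linarith [hL _ hmem])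
  have hcl := le_on_closure honD ((g_cont Q t hQc ht0).continuousOn) continuousOn_const
  have hz : z ∈ closure D := by rw [hdense.closure_eq]; trivial
  exact hcl hz

end Stmt2

namespace Stmt2
variable {m : ℕ} (Q : (Fin m → ℂ) → ℝ) (t : Fin m → ℝ)

lemma g_decay {ε₀ R : ℝ} (ht0 : ∀ i, 0 ≤ t i) (htsum : ∑ i, t i ≤ 1)
    (hg : ∀ z : Fin m → ℂ, R ≤ E z → (1 + ε₀) * Real.log (E z) ≤ Q z)
    (z : Fin m → ℂ) (hz : max R 1 ≤ E z) :
    g Q t z ≤ E z ^ (-(2 * ε₀)) := by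
  set e := E z with he
  have h1e : (1 : ℝ) ≤ e := (le_max_right R 1).trans hz
  have he0 : (0 : ℝ) < e := lt_of_lt_of_le one_pos h1e
  have hprod : (∏ i, ‖z i‖ ^ (2 * t i)) ≤ e ^ ((2 : ℝ)) := by
    calc (∏ i, ‖z i‖ ^ (2 * t i)) ≤ ∏ i, e ^ (2 * t i) :=
          Finset.prod_le_prod (fun i _ => Real.rpow_nonneg (norm_nonneg _) _)
            (fun i _ => Real.rpow_le_rpow (norm_nonneg _) (abs_le_E z i)
              (by have := ht0 i; linarith))
      _ = e ^ (∑ i, 2 * t i) := by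
          simp only [Real.rpow_def_of_pos he0]
          rw [← Real.exp_sum, Finset.mul_sum]
      _ ≤ e ^ ((2 : ℝ)) := Real.rpow_le_rpow_of_exponent_le h1e (by
          have h2 : ∑ i, 2 * t i = 2 * ∑ i, t i := by rw [Finset.mul_sum]
          linarith)
  have hexp : Real.exp (-2 * Q z) ≤ e ^ (-(2 * (1 + ε₀))) := by
    rw [Real.rpow_def_of_pos he0]
    apply Real.exp_le_exp.mpr
    have h := hg z ((le_max_left R 1).trans hz)
    have h2 : Real.log e * (-(2 * (1 + ε₀))) = -2 * ((1 + ε₀) * Real.log e) := by ring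
    rw [h2]; linarith
  calc g Q t z ≤ e ^ ((2 : ℝ)) * e ^ (-(2 * (1 + ε₀))) :=
        mul_le_mul hprod hexp (Real.exp_nonneg _)
          (Real.rpow_nonneg he0.le _)
    _ = e ^ (-(2 * ε₀)) := by rw [← Real.rpow_add he0]; congr 1; ring

lemma g_pow_bound {ε₀ R L : ℝ} (ht0 : ∀ i, 0 ≤ t i) (htsum : ∑ i, t i ≤ 1)
    (hg : ∀ z : Fin m → ℂ, R ≤ E z → (1 + ε₀) * Real.log (E z) ≤ Q z)
    (hle : ∀ z, g Q t z ≤ Real.exp (2 * L)) (n₀ : ℕ) (hq0 : 0 ≤ 2 * ε₀ * n₀) :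
    ∀ z : Fin m → ℂ, g Q t z ^ n₀ ≤
      (2 ^ (2 * ε₀ * n₀) + Real.exp (2 * L) ^ n₀ * (1 + max R 1) ^ (2 * ε₀ * n₀))
        * (1 + ‖z‖) ^ (-(2 * ε₀ * n₀)) := by
  intro z
  set q : ℝ := 2 * ε₀ * n₀ with hqdef
  have hbz : (0 : ℝ) < 1 + ‖z‖ := by positivity
  have hbznn : (0 : ℝ) ≤ (1 + ‖z‖) ^ (-q) := Real.rpow_nonneg hbz.le _
  by_cases hcase : max R 1 ≤ E z
  · have h1e : (1 : ℝ) ≤ E z := (le_max_right R 1).trans hcase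
    have he0 : (0 : ℝ) < E z := lt_of_lt_of_le one_pos h1e
    have h1 : g Q t z ^ n₀ ≤ (E z ^ (-(2 * ε₀))) ^ n₀ :=
      pow_le_pow_left₀ (g_nonneg Q t z) (g_decay Q t ht0 htsum hg z hcase) n₀
    have h2 : (E z ^ (-(2 * ε₀))) ^ n₀ = E z ^ (-q) := by
      rw [← Real.rpow_natCast (E z ^ (-(2 * ε₀))) n₀, ← Real.rpow_mul (E_nonneg z)]
      congr 1; rw [hqdef]; ring
    have h2E : 1 + ‖z‖ ≤ 2 * E z := by have := norm_le_E z; linarith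
    have h3 : (1 + ‖z‖) ^ q ≤ 2 ^ q * E z ^ q := by
      have := Real.rpow_le_rpow hbz.le h2E hq0
      rwa [Real.mul_rpow (by norm_num) (E_nonneg z)] at this
    have h4 : E z ^ (-q) ≤ 2 ^ q * (1 + ‖z‖) ^ (-q) := by
      rw [Real.rpow_neg (E_nonneg z), Real.rpow_neg hbz.le, ← div_eq_mul_inv,
        le_div_iff₀ (Real.rpow_pos_of_pos hbz _), inv_mul_le_iff₀ (Real.rpow_pos_of_pos he0 _)]
      linarith [mul_comm (E z ^ q) ((2 : ℝ) ^ q)]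
    have h5 : (2:ℝ) ^ q * (1 + ‖z‖) ^ (-q) ≤
        (2 ^ q + Real.exp (2 * L) ^ n₀ * (1 + max R 1) ^ q) * (1 + ‖z‖) ^ (-q) := by
      refine mul_le_mul_of_nonneg_right ?_ hbznn
      have : (0:ℝ) ≤ Real.exp (2 * L) ^ n₀ * (1 + max R 1) ^ q := by positivity
      linarith
    calc g Q t z ^ n₀ ≤ E z ^ (-q) := h2 ▸ h1
      _ ≤ 2 ^ q * (1 + ‖z‖) ^ (-q) := h4
      _ ≤ _ := h5
  · push_neg at hcase
    have hznorm : ‖z‖ < max R 1 := lt_of_le_of_lt (norm_le_E z) hcase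
    have hR1 : (0:ℝ) < 1 + max R 1 := by
      have : (1:ℝ) ≤ max R 1 := le_max_right _ _; linarith
    have h1 : g Q t z ^ n₀ ≤ Real.exp (2 * L) ^ n₀ :=
      pow_le_pow_left₀ (g_nonneg Q t z) (hle z) n₀
    have h2 : (1 + max R 1) ^ (-q) ≤ (1 + ‖z‖) ^ (-q) :=
      Real.rpow_le_rpow_of_nonpos hbz (by linarith) (by linarith)
    have h3 : Real.exp (2 * L) ^ n₀
        = (Real.exp (2 * L) ^ n₀ * (1 + max R 1) ^ q) * (1 + max R 1) ^ (-q) := by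
      rw [mul_assoc, ← Real.rpow_add hR1]
      simp
    calc g Q t z ^ n₀ ≤ Real.exp (2 * L) ^ n₀ := h1
      _ = (Real.exp (2 * L) ^ n₀ * (1 + max R 1) ^ q) * (1 + max R 1) ^ (-q) := h3
      _ ≤ (Real.exp (2 * L) ^ n₀ * (1 + max R 1) ^ q) * (1 + ‖z‖) ^ (-q) :=
          mul_le_mul_of_nonneg_left h2 (by positivity)
      _ ≤ _ := by
          refine mul_le_mul_of_nonneg_right ?_ hbznn
          have : (0:ℝ) ≤ (2:ℝ) ^ q := by positivity
          linarith

end Stmt2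

namespace Stmt2
variable {m : ℕ} (Q : (Fin m → ℂ) → ℝ) (t : Fin m → ℝ)

lemma integrable_g_pow {ε₀ R L : ℝ} (hε₀ : 0 < ε₀) (hQc : Continuous Q)
    (ht0 : ∀ i, 0 ≤ t i) (htsum : ∑ i, t i ≤ 1)
    (hg : ∀ z : Fin m → ℂ, R ≤ E z → (1 + ε₀) * Real.log (E z) ≤ Q z)
    (hle : ∀ z, g Q t z ≤ Real.exp (2 * L)) {n₀ : ℕ} (hn₀ : (m : ℝ) < ε₀ * n₀) :
    Integrable (fun z : Fin m → ℂ => g Q t z ^ n₀) volume := by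
  set q : ℝ := 2 * ε₀ * n₀ with hqdef
  have hq0 : 0 ≤ q := by positivity
  have hfr : (Module.finrank ℝ (Fin m → ℂ) : ℝ) < q := by
    rw [show Module.finrank ℝ (Fin m → ℂ) = 2 * m by
      rw [Module.finrank_pi_fintype]; simp [Complex.finrank_real_complex, mul_comm]]
    push_cast; rw [hqdef]; nlinarith
  have hint := (integrable_one_add_norm (E := Fin m → ℂ) (μ := volume) hfr).const_mul
    (2 ^ q + Real.exp (2 * L) ^ n₀ * (1 + max R 1) ^ q)
  refine hint.mono' (((g_cont Q t hQc ht0).pow n₀).aestronglyMeasurable) ?_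
  refine ae_of_all _ fun z => ?_
  rw [Real.norm_eq_abs, abs_of_nonneg (pow_nonneg (g_nonneg Q t z) n₀)]
  exact g_pow_bound Q t ht0 htsum hg hle n₀ hq0 z

lemma g_pow_le_of_le {L : ℝ} (hle : ∀ z, g Q t z ≤ Real.exp (2 * L))
    {n₀ n : ℕ} (hn : n₀ ≤ n) (z : Fin m → ℂ) :
    g Q t z ^ n ≤ Real.exp (2 * L) ^ (n - n₀) * g Q t z ^ n₀ := by
  have h : g Q t z ^ n = g Q t z ^ (n - n₀) * g Q t z ^ n₀ := by
    rw [← pow_add]; congr 1; omega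
  rw [h]
  exact mul_le_mul_of_nonneg_right
    (pow_le_pow_left₀ (g_nonneg Q t z) (hle z) _)
    (pow_nonneg (g_nonneg Q t z) n₀)

end Stmt2

namespace Stmt2
variable {m : ℕ} (Q : (Fin m → ℂ) → ℝ) (t : Fin m → ℝ)

lemma lower_bound (hQc : Continuous Q) (ht0 : ∀ i, 0 ≤ t i)
    {y η : ℝ} (hy : y ∈ S Q t) (hη : 0 < η) :
    ∃ v : ℝ, 0 < v ∧ ∀ n : ℕ, Integrable (fun z => g Q t z ^ n) volume →
      v * Real.exp (2 * (y - η)) ^ n ≤ ∫ z : Fin m → ℂ, g Q t z ^ n := by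
  obtain ⟨r, hr, hyeq⟩ := hy
  set zr : Fin m → ℂ := fun i => (r i : ℂ) with hzr
  have hgz : g Q t zr = Real.exp (2 * y) := by rw [hzr, g_eval Q t r hr, hyeq]
  set c : ℝ := Real.exp (2 * (y - η)) with hc
  have hcpos : 0 < c := Real.exp_pos _
  have hclt : c < g Q t zr := by
    rw [hgz, hc]; exact Real.exp_lt_exp.mpr (by linarith)
  set U : Set (Fin m → ℂ) := (g Q t) ⁻¹' Set.Ioi c with hU
  have hUopen : IsOpen U := (isOpen_Ioi).preimage (g_cont Q t hQc ht0)
  have hzU : zr ∈ U := hclt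
  obtain ⟨δ, hδ, hball⟩ := Metric.isOpen_iff.mp hUopen zr hzU
  set v : ℝ := (volume (Metric.ball zr δ)).toReal with hv
  refine ⟨v, ?_, ?_⟩
  · exact ENNReal.toReal_pos (Metric.measure_ball_pos volume zr hδ).ne' measure_ball_lt_top.ne
  · intro n hint
    have h1 : ∫ z in Metric.ball zr δ, (c ^ n : ℝ) ≤ ∫ z in Metric.ball zr δ, g Q t z ^ n := by
      refine setIntegral_mono_on (integrableOn_const measure_ball_lt_top.ne)
        hint.integrableOn measurableSet_ball fun x hx => ?_
      exact pow_le_pow_left₀ hcpos.le (le_of_lt (hball hx)) n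
    have h2 : ∫ _z in Metric.ball zr δ, (c ^ n : ℝ) = v * c ^ n := by
      rw [setIntegral_const, smul_eq_mul]; rfl
    have h3 : ∫ z in Metric.ball zr δ, g Q t z ^ n ≤ ∫ z : Fin m → ℂ, g Q t z ^ n :=
      setIntegral_le_integral hint (ae_of_all _ fun z => pow_nonneg (g_nonneg Q t z) n)
    linarith

end Stmt2


/-- The key asymptotic computation (via Varadhan's lemma) in the proof of Lemma 3.1:
for a nonnegative `C²` multi-circular weight `Q` on `ℂ^m` with super-logarithmic growth
and `T ∈ [0,1]^m` with `∑ tⱼ ≤ 1`, the weighted `L²`-norms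
`I_n = ∫ ∏ |z_j|^(2 n t_j) e^(-2 n Q(z)) dV` are finite for large `n` and
`(1/(2n)) log I_n → sup_{r ∈ (0,∞)^m} (∑ t_j log r_j - Q(r))`, this sup being finite. -/
theorem stmt_2 (m : ℕ) (hm : 1 ≤ m) (Q : (Fin m → ℂ) → ℝ)
    (hQ0 : ∀ z, 0 ≤ Q z) (hQC2 : ContDiff ℝ 2 Q)
    (hcirc : ∀ z : Fin m → ℂ, Q z = Q (fun i => (‖z i‖ : ℂ)))
    (ε₀ : ℝ) (hε₀ : 0 < ε₀)
    (hgrowth : ∃ R : ℝ, ∀ z : Fin m → ℂ,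
      R ≤ Real.sqrt (∑ i, ‖z i‖ ^ 2) →
      (1 + ε₀) * Real.log (Real.sqrt (∑ i, ‖z i‖ ^ 2)) ≤ Q z)
    (t : Fin m → ℝ) (ht0 : ∀ i, 0 ≤ t i) (ht1 : ∀ i, t i ≤ 1) (htsum : ∑ i, t i ≤ 1) :
    ∃ L : ℝ,
      IsLUB {y : ℝ | ∃ r : Fin m → ℝ, (∀ i, 0 < r i) ∧
        y = ∑ i, t i * Real.log (r i) - Q (fun i => (r i : ℂ))} L ∧
      (∀ᶠ n : ℕ in atTop, Integrable
        (fun z : Fin m → ℂ =>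
          (∏ i, ‖z i‖ ^ (2 * (n : ℝ) * t i)) * Real.exp (-2 * n * Q z))
        volume) ∧
      Tendsto (fun n : ℕ => (1 / (2 * (n : ℝ))) * Real.log
        (∫ z : Fin m → ℂ,
          (∏ i, ‖z i‖ ^ (2 * (n : ℝ) * t i)) * Real.exp (-2 * n * Q z)))
        atTop (nhds L) := by
  classical
  obtain ⟨R, hR⟩ := hgrowth
  have hQc : Continuous Q := hQC2.continuous
  have hg : ∀ z : Fin m → ℂ, R ≤ Stmt2.E z → (1 + ε₀) * Real.log (Stmt2.E z) ≤ Q z := hR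
  have hbdd : ∀ y ∈ Stmt2.S Q t, y ≤ Real.log (max R 1) :=
    Stmt2.S_bdd Q t hε₀ hQ0 ht0 htsum hg
  have hne := Stmt2.S_nonempty Q t
  set L := sSup (Stmt2.S Q t) with hLdef
  have hlub : IsLUB (Stmt2.S Q t) L := isLUB_csSup hne ⟨_, hbdd⟩
  have hle : ∀ z, Stmt2.g Q t z ≤ Real.exp (2 * L) :=
    Stmt2.g_le Q t hQc ht0 hcirc (fun y hy => hlub.1 hy)
  -- choice of n₀
  obtain ⟨n₀, hn₀⟩ := exists_nat_gt ((m : ℝ) / ε₀)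
  have hn₀' : (m : ℝ) < ε₀ * n₀ := by
    rw [div_lt_iff₀ hε₀] at hn₀; linarith
  have hint₀ : Integrable (fun z : Fin m → ℂ => Stmt2.g Q t z ^ n₀) volume :=
    Stmt2.integrable_g_pow Q t hε₀ hQc ht0 htsum hg hle hn₀'
  have hintn : ∀ n, n₀ ≤ n → Integrable (fun z : Fin m → ℂ => Stmt2.g Q t z ^ n) volume := by
    intro n hn
    refine (hint₀.const_mul (Real.exp (2 * L) ^ (n - n₀))).mono'
      (((Stmt2.g_cont Q t hQc ht0).pow n).aestronglyMeasurable) (ae_of_all _ fun z => ?_)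
    rw [Real.norm_eq_abs, abs_of_nonneg (pow_nonneg (Stmt2.g_nonneg Q t z) n)]
    exact Stmt2.g_pow_le_of_le Q t hle hn z
  refine ⟨L, hlub, ?_, ?_⟩
  · simp only [Stmt2.f_eq Q t]
    exact eventually_atTop.mpr ⟨n₀, hintn⟩
  · simp only [Stmt2.f_eq Q t]
    set I : ℕ → ℝ := fun n => ∫ z : Fin m → ℂ, Stmt2.g Q t z ^ n with hIdef
    -- positivity of I n for n ≥ n₀
    obtain ⟨y₀, hy₀S⟩ := hne
    obtain ⟨v₀, hv₀, hlow₀⟩ := Stmt2.lower_bound Q t hQc ht0 hy₀S one_pos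
    have hIpos : ∀ n, n₀ ≤ n → 0 < I n := fun n hn =>
      lt_of_lt_of_le (by positivity) (hlow₀ n (hintn n hn))
    -- upper bound on I n
    have hIub : ∀ n, n₀ ≤ n → I n ≤ Real.exp (2 * L) ^ (n - n₀) * I n₀ := by
      intro n hn
      calc I n ≤ ∫ z : Fin m → ℂ, Real.exp (2 * L) ^ (n - n₀) * Stmt2.g Q t z ^ n₀ :=
            integral_mono (hintn n hn) (hint₀.const_mul _) (Stmt2.g_pow_le_of_le Q t hle hn)
        _ = Real.exp (2 * L) ^ (n - n₀) * I n₀ := integral_const_mul _ _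
    rw [Metric.tendsto_atTop]
    intro ε hε
    obtain ⟨y, hyS, hy⟩ := exists_lt_of_lt_csSup (Stmt2.S_nonempty Q t)
      (show L - ε/4 < sSup (Stmt2.S Q t) by rw [← hLdef]; linarith)
    obtain ⟨v, hv, hlow⟩ := Stmt2.lower_bound Q t hQc ht0 hyS (show (0:ℝ) < ε/4 by linarith)
    set K : ℝ := |Real.log v| + |Real.log (I n₀) - 2 * n₀ * L| + 1 with hK
    have hKpos : 0 < K := by positivity
    obtain ⟨N₁, hN₁⟩ := exists_nat_gt (K / (ε/2))
    refine ⟨max N₁ (max n₀ 1), fun n hn => ?_⟩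
    have hnn₀ : n₀ ≤ n := le_trans (le_trans (le_max_left n₀ 1) (le_max_right N₁ _)) hn
    have hn1 : 1 ≤ n := le_trans (le_trans (le_max_right n₀ 1) (le_max_right N₁ _)) hn
    have hnN₁ : (N₁ : ℝ) ≤ n := Nat.cast_le.mpr (le_trans (le_max_left N₁ _) hn)
    have hnpos : (0:ℝ) < n := by exact_mod_cast hn1
    have hKn : K / (2 * n) < ε / 2 := by
      rw [div_lt_iff₀ (by positivity)]
      rw [div_lt_iff₀ (by linarith)] at hN₁
      nlinarith
    -- the quantity
    have hIa : 0 < I n := hIpos n hnn₀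
    have hIa₀ : 0 < I n₀ := hIpos n₀ le_rfl
    -- upper estimate
    have hup : (1 / (2 * (n:ℝ))) * Real.log (I n) - L ≤ (Real.log (I n₀) - 2 * n₀ * L) / (2 * n) := by
      have h1 : Real.log (I n) ≤ ((n:ℝ) - n₀) * (2 * L) + Real.log (I n₀) := by
        have := Real.log_le_log hIa (hIub n hnn₀)
        rwa [Real.log_mul (pow_ne_zero _ (Real.exp_ne_zero _)) hIa₀.ne',
          Real.log_pow, Real.log_exp, Nat.cast_sub hnn₀] at this
      have h2 : (1 / (2 * (n:ℝ))) * (((n:ℝ) - n₀) * (2 * L) + Real.log (I n₀)) - L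
          = (Real.log (I n₀) - 2 * n₀ * L) / (2 * n) := by
        field_simp
        ring
      have h3 := mul_le_mul_of_nonneg_left h1
        (show (0:ℝ) ≤ 1 / (2 * n) by positivity)
      linarith
    -- lower estimate
    have hlo : Real.log v / (2 * n) + (y - ε/4) ≤ (1 / (2 * (n:ℝ))) * Real.log (I n) := by
      have h1 : Real.log v + (n:ℝ) * (2 * (y - ε/4)) ≤ Real.log (I n) := by
        have := Real.log_le_log (show (0:ℝ) < v * Real.exp (2 * (y - ε/4)) ^ n by positivity)
          (hlow n (hintn n hnn₀))
        rwa [Real.log_mul hv.ne' (pow_ne_zero _ (Real.exp_ne_zero _)),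
          Real.log_pow, Real.log_exp] at this
      have h2 : (1 / (2 * (n:ℝ))) * (Real.log v + (n:ℝ) * (2 * (y - ε/4)))
          = Real.log v / (2 * n) + (y - ε/4) := by
        field_simp
      have h3 := mul_le_mul_of_nonneg_left h1
        (show (0:ℝ) ≤ 1 / (2 * n) by positivity)
      linarith
    rw [Real.dist_eq, abs_lt]
    have hlogv : -K / (2 * (n:ℝ)) ≤ Real.log v / (2 * (n:ℝ)) := by
      refine (div_le_div_iff_of_pos_right (by positivity)).mpr ?_
      have h5 := neg_abs_le (Real.log v)
      have h6 := abs_nonneg (Real.log (I n₀) - 2 * (n₀:ℝ) * L)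
      rw [hK]; linarith
    have h4 : (Real.log (I n₀) - 2 * (n₀:ℝ) * L) / (2 * (n:ℝ)) ≤ K / (2 * (n:ℝ)) := by
      refine (div_le_div_iff_of_pos_right (by positivity)).mpr ?_
      have h5 := le_abs_self (Real.log (I n₀) - 2 * (n₀:ℝ) * L)
      have h6 := abs_nonneg (Real.log v)
      rw [hK]; linarith
    constructor
    · have h7 : -(K / (2 * (n:ℝ))) = -K / (2 * (n:ℝ)) := (neg_div _ _).symm
      linarith
    · linarith
end

section
/- Let m ≥ 1. For every ε > 0 and every z ∈ (ℂ∖{0})^m there exist δ > 0 and N ∈ ℕ such that for all n ≥ N, the number of multi-indices J ∈ ℕ^m with |J| ≤ n and C(n,J)^{1/2} |z^J| > (1+‖z‖²)^{n/2} e^{−ε n} is at least δ · binom(n+m, m). -/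
open MeasureTheory Filter
open scoped Classical

/-- The multinomial coefficient `C(n,J) = n! / ((n-|J|)! j₁! ⋯ j_m!)`. -/
noncomputable def multiCoeff (m n : ℕ) (J : Fin m → ℕ) : ℝ :=
  (n.factorial : ℝ) / (((n - ∑ i, J i).factorial : ℝ) * ∏ i, ((J i).factorial : ℝ))

/-- The random elliptic polynomial `G_n(z) = ∑_{|J| ≤ n} a_J C(n,J)^(1/2) z^J`. -/
noncomputable def ellipticPoly {Ω : Type*} {m : ℕ} (a : (Fin m → ℕ) → Ω → ℂ)
    (n : ℕ) (ω : Ω) (z : Fin m → ℂ) : ℂ :=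
  ∑ J ∈ (Fintype.piFinset fun _ : Fin m => Finset.range (n + 1)).filter
      (fun J => ∑ i, J i ≤ n),
    a J ω * (Real.sqrt (multiCoeff m n J) : ℂ) * ∏ i, z i ^ J i

section AuxLemmas

open Real

/-- `n^n ≤ n! e^n`. -/
lemma fact_lower (n : ℕ) : (n:ℝ)^n ≤ (n.factorial : ℝ) * Real.exp n := by
  induction n with
  | zero => simp
  | succ n ih =>
    have hstep : ((n:ℝ)+1)^n ≤ Real.exp 1 * (n:ℝ)^n := by
      rcases Nat.eq_zero_or_pos n with h0 | hp
      · subst h0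
        simp only [Nat.cast_zero, pow_zero, zero_add, mul_one]
        nlinarith [Real.add_one_le_exp (1:ℝ)]
      · have hn : (0:ℝ) < n := by exact_mod_cast hp
        have h1 : (n:ℝ)+1 ≤ (n:ℝ) * Real.exp (1/n) := by
          have := Real.add_one_le_exp (1/(n:ℝ))
          calc (n:ℝ)+1 = (n:ℝ) * (1/(n:ℝ) + 1) := by field_simp; ring
            _ ≤ (n:ℝ) * Real.exp (1/n) := by
                exact mul_le_mul_of_nonneg_left this (le_of_lt hn)
        calc ((n:ℝ)+1)^n ≤ ((n:ℝ) * Real.exp (1/n))^n :=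
              pow_le_pow_left₀ (by positivity) h1 n
          _ = (n:ℝ)^n * Real.exp (1/n) ^ n := mul_pow _ _ _
          _ = (n:ℝ)^n * Real.exp ((n:ℕ) * (1/(n:ℝ))) := by rw [Real.exp_nat_mul]
          _ = (n:ℝ)^n * Real.exp 1 := by
              congr 1
              rw [mul_one_div, div_self (ne_of_gt hn)]
          _ = Real.exp 1 * (n:ℝ)^n := by ring
    have e1 : (0:ℝ) < Real.exp 1 := Real.exp_pos 1
    have hnn : (0:ℝ) ≤ (n:ℝ)+1 := by positivity
    calc ((n+1:ℕ):ℝ)^(n+1) = ((n:ℝ)+1) * ((n:ℝ)+1)^n := by push_cast; ring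
      _ ≤ ((n:ℝ)+1) * (Real.exp 1 * (n:ℝ)^n) := mul_le_mul_of_nonneg_left hstep hnn
      _ ≤ ((n:ℝ)+1) * (Real.exp 1 * ((n.factorial:ℝ) * Real.exp n)) := by
          have : Real.exp 1 * (n:ℝ)^n ≤ Real.exp 1 * ((n.factorial:ℝ) * Real.exp n) :=
            mul_le_mul_of_nonneg_left ih (le_of_lt e1)
          exact mul_le_mul_of_nonneg_left this hnn
      _ = ((n+1:ℕ).factorial : ℝ) * Real.exp ((n+1:ℕ)) := by
          rw [Nat.factorial_succ]
          push_cast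
          rw [Real.exp_add]
          ring

/-- helper: `exp(1/(n+1)) * n ≤ n + 1`. -/
lemma exp_inv_mul_le (n : ℕ) : Real.exp (1/((n:ℝ)+1)) * n ≤ (n:ℝ)+1 := by
  set u : ℝ := 1/((n:ℝ)+1) with hu
  have hn1 : (0:ℝ) < (n:ℝ)+1 := by positivity
  have h1 : (n:ℝ)/((n:ℝ)+1) ≤ Real.exp (-u) := by
    have := Real.add_one_le_exp (-u)
    have : 1 - u ≤ Real.exp (-u) := by linarith
    calc (n:ℝ)/((n:ℝ)+1) = 1 - u := by rw [hu]; field_simp; ring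
      _ ≤ Real.exp (-u) := this
  have hepos : (0:ℝ) < Real.exp u := Real.exp_pos u
  have h2 : Real.exp u * ((n:ℝ)/((n:ℝ)+1)) ≤ Real.exp u * Real.exp (-u) :=
    mul_le_mul_of_nonneg_left h1 (le_of_lt hepos)
  rw [← Real.exp_add] at h2
  simp only [add_neg_cancel, Real.exp_zero] at h2
  have h3 : Real.exp u * ((n:ℝ)/((n:ℝ)+1)) * ((n:ℝ)+1) ≤ 1 * ((n:ℝ)+1) :=
    mul_le_mul_of_nonneg_right h2 (le_of_lt hn1)
  calc Real.exp u * (n:ℝ) = Real.exp u * ((n:ℝ)/((n:ℝ)+1)) * ((n:ℝ)+1) := by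
        field_simp
    _ ≤ 1 * ((n:ℝ)+1) := h3
    _ = (n:ℝ)+1 := one_mul _

/-- `n! e^n ≤ e n^(n+1)` for `n ≥ 1`. -/
lemma fact_upper : ∀ n : ℕ, 1 ≤ n → (n.factorial : ℝ) * Real.exp n ≤ Real.exp 1 * (n:ℝ)^(n+1) := by
  intro n
  induction n with
  | zero => intro h; omega
  | succ n ih =>
    intro _
    rcases Nat.eq_zero_or_pos n with h0 | hp
    · subst h0; norm_num [Nat.factorial]
    · have ihn := ih hp
      have hn : (0:ℝ) < n := by exact_mod_cast hp
      have key : Real.exp 1 * (n:ℝ)^(n+1) ≤ ((n:ℝ)+1)^(n+1) := by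
        have h1 : Real.exp 1 = Real.exp (1/((n:ℝ)+1)) ^ (n+1) := by
          rw [← Real.exp_nat_mul]
          congr 1
          push_cast
          field_simp
        have h2 : (Real.exp (1/((n:ℝ)+1)) * n)^(n+1) ≤ ((n:ℝ)+1)^(n+1) :=
          pow_le_pow_left₀ (by positivity) (exp_inv_mul_le n) (n+1)
        calc Real.exp 1 * (n:ℝ)^(n+1) = (Real.exp (1/((n:ℝ)+1)) * n)^(n+1) := by
              rw [mul_pow, ← h1]
          _ ≤ ((n:ℝ)+1)^(n+1) := h2
      have e1 : (0:ℝ) < Real.exp 1 := Real.exp_pos 1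
      calc ((n+1:ℕ).factorial : ℝ) * Real.exp ((n+1:ℕ)) 
          = ((n:ℝ)+1) * Real.exp 1 * ((n.factorial:ℝ) * Real.exp n) := by
            rw [Nat.factorial_succ]
            push_cast
            rw [Real.exp_add]
            ring
        _ ≤ ((n:ℝ)+1) * Real.exp 1 * (Real.exp 1 * (n:ℝ)^(n+1)) := by
            apply mul_le_mul_of_nonneg_left ihn
            positivity
        _ ≤ ((n:ℝ)+1) * Real.exp 1 * (((n:ℝ)+1)^(n+1)) := by
            apply mul_le_mul_of_nonneg_left key
            positivity
        _ = Real.exp 1 * ((n+1:ℕ):ℝ)^((n+1)+1) := by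
            push_cast
            ring

/-- Entropy-type lower bound for one binomial factor. -/
lemma binom_entropy (a b : ℕ) (hba : b ≤ a) :
    1/(Real.exp 1 * ((a:ℝ)+1))^2 ≤
      (a.choose b : ℝ) * ((b:ℝ)/a)^b * (((a-b:ℕ):ℝ)/a)^(a-b) := by
  have e1 : (1:ℝ) ≤ Real.exp 1 := by nlinarith [Real.add_one_le_exp (1:ℝ)]
  have e0 : (0:ℝ) < Real.exp 1 := Real.exp_pos 1
  rcases Nat.eq_zero_or_pos a with ha0 | hap
  · subst ha0
    interval_cases b
    simp only [Nat.choose_self, Nat.cast_one, Nat.cast_zero]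
    norm_num
    have h2 : (1:ℝ) ≤ Real.exp 2 := by nlinarith [Real.add_one_le_exp (2:ℝ)]
    exact inv_le_one_of_one_le₀ h2
  have haR : (0:ℝ) < a := by exact_mod_cast hap
  rcases Nat.eq_zero_or_pos b with hb0 | hbp
  · subst hb0
    simp only [Nat.choose_zero_right, Nat.cast_one, Nat.cast_zero, pow_zero, Nat.sub_zero,
      one_mul, mul_one]
    rw [div_self (ne_of_gt haR), one_pow]
    rw [div_le_one (by positivity)]
    have h2 : (1:ℝ) ≤ Real.exp 1 * ((a:ℝ)+1) := by nlinarith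
    nlinarith [h2]
  rcases eq_or_lt_of_le hba with hbeq | hblt
  · subst hbeq
    simp only [Nat.choose_self, Nat.cast_one, Nat.sub_self, pow_zero, mul_one, one_mul]
    rw [div_self (ne_of_gt (by exact_mod_cast hbp : (0:ℝ) < b)), one_pow]
    rw [div_le_one (by positivity)]
    have h2 : (1:ℝ) ≤ Real.exp 1 * ((b:ℝ)+1) := by nlinarith
    nlinarith [h2]
  -- main case : 1 ≤ b < a
  set c : ℕ := a - b with hc
  have hcp : 1 ≤ c := by omega
  have hbc : b + c = a := by omega
  have hbR : (0:ℝ) < b := by exact_mod_cast hbp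
  have hcR : (0:ℝ) < c := by exact_mod_cast hcp
  -- key : b! c! a^a ≤ e^2 b c a! b^b c^c
  have expsplit : Real.exp (a:ℕ) = Real.exp b * Real.exp c := by
    rw [← Real.exp_add]
    congr 1
    rw [← hbc]; push_cast; ring
  have key : (b.factorial : ℝ) * (c.factorial : ℝ) * (a:ℝ)^a ≤
      Real.exp 1 ^ 2 * ((b:ℝ) * c) * (a.factorial : ℝ) * ((b:ℝ)^b * (c:ℝ)^c) := by
    have h1 : (a:ℝ)^a ≤ (a.factorial : ℝ) * Real.exp a := fact_lower a
    have hb' : (b.factorial : ℝ) * Real.exp b ≤ Real.exp 1 * (b:ℝ)^(b+1) := fact_upper b hbp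
    have hc' : (c.factorial : ℝ) * Real.exp c ≤ Real.exp 1 * (c:ℝ)^(c+1) := fact_upper c hcp
    have hfb : (0:ℝ) < b.factorial := by exact_mod_cast b.factorial_pos
    have hfc : (0:ℝ) < c.factorial := by exact_mod_cast c.factorial_pos
    have hfa : (0:ℝ) < a.factorial := by exact_mod_cast a.factorial_pos
    calc (b.factorial : ℝ) * (c.factorial : ℝ) * (a:ℝ)^a
        ≤ (b.factorial : ℝ) * (c.factorial : ℝ) * ((a.factorial : ℝ) * Real.exp a) := by
          apply mul_le_mul_of_nonneg_left h1; positivity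
      _ = ((b.factorial : ℝ) * Real.exp b) * ((c.factorial : ℝ) * Real.exp c) * (a.factorial : ℝ) := by
          rw [expsplit]; ring
      _ ≤ (Real.exp 1 * (b:ℝ)^(b+1)) * (Real.exp 1 * (c:ℝ)^(c+1)) * (a.factorial : ℝ) := by
          apply mul_le_mul_of_nonneg_right _ (le_of_lt hfa)
          apply mul_le_mul hb' hc' (by positivity) (by positivity)
      _ = Real.exp 1 ^ 2 * ((b:ℝ) * c) * (a.factorial : ℝ) * ((b:ℝ)^b * (c:ℝ)^c) := by
          ring
  -- now assemble
  rw [Nat.cast_choose ℝ hba, ← hc]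
  have hA : (a:ℝ)^b * (a:ℝ)^c = (a:ℝ)^a := by rw [← pow_add, hbc]
  have rhs_eq : (a.factorial : ℝ) / ((b.factorial:ℝ) * (c.factorial:ℝ)) * ((b:ℝ)/a)^b * ((c:ℝ)/a)^c
      = ((a.factorial : ℝ) * ((b:ℝ)^b * (c:ℝ)^c)) / ((b.factorial:ℝ) * (c.factorial:ℝ) * (a:ℝ)^a) := by
    rw [div_pow, div_pow, ← hA]
    field_simp
  rw [rhs_eq]
  rw [div_le_div_iff₀ (by positivity) (by positivity)]
  have hb1 : (b:ℝ) ≤ (a:ℝ)+1 := by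
    have : b ≤ a + 1 := by omega
    exact_mod_cast this
  have hc1 : (c:ℝ) ≤ (a:ℝ)+1 := by
    have : c ≤ a + 1 := by omega
    exact_mod_cast this
  have hbc1 : (b:ℝ) * c ≤ ((a:ℝ)+1)^2 := by
    have := mul_le_mul hb1 hc1 (le_of_lt hcR) (by positivity)
    nlinarith
  calc 1 * ((b.factorial:ℝ) * (c.factorial:ℝ) * (a:ℝ)^a)
      = (b.factorial:ℝ) * (c.factorial:ℝ) * (a:ℝ)^a := one_mul _
    _ ≤ Real.exp 1 ^ 2 * ((b:ℝ) * c) * (a.factorial : ℝ) * ((b:ℝ)^b * (c:ℝ)^c) := key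
    _ ≤ Real.exp 1 ^ 2 * ((a:ℝ)+1)^2 * (a.factorial : ℝ) * ((b:ℝ)^b * (c:ℝ)^c) := by
        have h2 : Real.exp 1 ^ 2 * ((b:ℝ) * c) ≤ Real.exp 1 ^ 2 * ((a:ℝ)+1)^2 :=
          mul_le_mul_of_nonneg_left hbc1 (by positivity)
        apply mul_le_mul_of_nonneg_right _ (by positivity)
        exact mul_le_mul_of_nonneg_right h2 (by positivity)
    _ = (a.factorial : ℝ) * ((b:ℝ)^b * (c:ℝ)^c) * (Real.exp 1 * ((a:ℝ)+1))^2 := by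
        ring

/-- Entropy-type lower bound for the multinomial coefficient. -/
lemma multinomial_entropy : ∀ (m n : ℕ) (k : Fin m → ℕ) (k0 : ℕ), k0 + ∑ i, k i = n →
    1/(Real.exp 1 * ((n:ℝ)+1))^(2*m) ≤
      ((n.factorial : ℝ) / ((k0.factorial : ℝ) * ∏ i, ((k i).factorial : ℝ)))
        * (((k0:ℝ)/n)^k0 * ∏ i, ((k i : ℝ)/n)^(k i)) := by
  intro m
  induction m with
  | zero =>
    intro n k k0 hsum
    simp only [Finset.univ_eq_empty, Finset.prod_empty, Finset.sum_empty, mul_one,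
      add_zero, mul_zero, pow_zero] at *
    subst hsum
    rcases Nat.eq_zero_or_pos k0 with h0 | hp
    · subst h0; norm_num
    · have hk0 : ((k0:ℝ)) ≠ 0 := by
        have : (0:ℝ) < k0 := by exact_mod_cast hp
        exact ne_of_gt this
      have hf : ((k0.factorial:ℝ)) ≠ 0 := by positivity
      rw [div_self hk0, one_pow, div_self hf]
      norm_num
  | succ m ih =>
    intro n k k0 hsum
    set b : ℕ := k 0 with hb
    set k' : Fin m → ℕ := fun i => k i.succ with hk'
    have hsum' : ∑ i, k i = b + ∑ i, k' i := Fin.sum_univ_succ k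
    have hbn : b ≤ n := by omega
    set n' : ℕ := n - b with hn'
    have hsum'' : k0 + ∑ i, k' i = n' := by omega
    have hn'n : n' ≤ n := Nat.sub_le n b
    have IH := ih n' k' k0 hsum''
    have hfb : ((b.factorial : ℝ)) ≠ 0 := by positivity
    have hfk0 : ((k0.factorial : ℝ)) ≠ 0 := by positivity
    have hfp : (∏ i, ((k' i).factorial : ℝ)) ≠ 0 := by
      apply Finset.prod_ne_zero_iff.mpr
      intro i _
      positivity
    have hfn' : ((n'.factorial : ℝ)) ≠ 0 := by positivity
    -- E1 : factorial identity
    have E1 : ((n.factorial : ℝ) / ((k0.factorial : ℝ) * ∏ i, ((k i).factorial : ℝ)))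
        = (n.choose b : ℝ) * ((n'.factorial : ℝ) / ((k0.factorial : ℝ) * ∏ i, ((k' i).factorial : ℝ))) := by
      rw [Fin.prod_univ_succ]
      rw [Nat.cast_choose ℝ hbn, ← hn']
      field_simp
      ring
    -- E2 : power identity
    have E2 : (((k0:ℝ)/n)^k0 * ∏ i, ((k i : ℝ)/n)^(k i))
        = ((b:ℝ)/n)^b * ((n':ℝ)/n)^(n')
          * (((k0:ℝ)/n')^k0 * ∏ i, ((k' i : ℝ)/n')^(k' i)) := by
      rw [Fin.prod_univ_succ]
      rcases Nat.eq_zero_or_pos n' with h0 | hp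
      · have hk0 : k0 = 0 := by omega
        have hks : ∀ i, k' i = 0 := by
          intro i
          have h1 : ∑ i, k' i = 0 := by omega
          have := Finset.sum_eq_zero_iff.mp h1 i (Finset.mem_univ i)
          exact this
        have h1 : (∏ i : Fin m, ((k i.succ : ℝ)/(n:ℝ))^(k i.succ)) = 1 := by
          apply Finset.prod_eq_one
          intro i _
          show ((k' i : ℝ)/(n:ℝ))^(k' i) = 1
          rw [hks i]; simp
        have h2 : (∏ i : Fin m, ((k' i : ℝ)/(n':ℝ))^(k' i)) = 1 := by
          apply Finset.prod_eq_one
          intro i _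
          rw [hks i]; simp
        rw [h0] at h2
        rw [h0, hk0, h1, h2]
        simp
        rfl
      · have hn'R : ((n':ℝ)) ≠ 0 := by
          have : (0:ℝ) < n' := by exact_mod_cast hp
          exact ne_of_gt this
        have split : ∀ j : ℕ, ((j:ℝ)/n) = ((j:ℝ)/n') * ((n':ℝ)/n) := by
          intro j
          rw [div_mul_div_comm, mul_comm (j:ℝ) (n':ℝ), mul_div_mul_left _ _ hn'R]
        have h1 : (∏ i : Fin m, ((k i.succ : ℝ)/(n:ℝ))^(k i.succ))
            = (∏ i : Fin m, ((k' i : ℝ)/(n':ℝ))^(k' i)) * ((n':ℝ)/n)^(∑ i, k' i) := by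
          rw [← Finset.prod_pow_eq_pow_sum, ← Finset.prod_mul_distrib]
          apply Finset.prod_congr rfl
          intro i _
          show ((k' i : ℝ)/(n:ℝ))^(k' i) = _
          rw [split (k' i), mul_pow]
        rw [h1, split k0, mul_pow]
        have hcomb : ((n':ℝ)/n)^k0 * ((n':ℝ)/n)^(∑ i, k' i) = ((n':ℝ)/n)^(n') := by
          rw [← pow_add, hsum'']
        rw [← hcomb]
        ring
    rw [E1, E2]
    -- assemble the inequality
    have hF1 : 1/(Real.exp 1 * ((n:ℝ)+1))^2 ≤ (n.choose b : ℝ) * ((b:ℝ)/n)^b * ((n':ℝ)/n)^(n') := by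
      have := binom_entropy n b hbn
      rw [← hn'] at this
      exact this
    have hmono : 1/(Real.exp 1 * ((n:ℝ)+1))^(2*m) ≤ 1/(Real.exp 1 * ((n':ℝ)+1))^(2*m) := by
      apply one_div_le_one_div_of_le (by positivity)
      apply pow_le_pow_left₀ (by positivity)
      have : ((n':ℝ)) ≤ ((n:ℝ)) := by exact_mod_cast hn'n
      nlinarith [Real.exp_pos 1]
    have hF2 : 1/(Real.exp 1 * ((n:ℝ)+1))^(2*m) ≤
        ((n'.factorial : ℝ) / ((k0.factorial : ℝ) * ∏ i, ((k' i).factorial : ℝ)))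
          * (((k0:ℝ)/n')^k0 * ∏ i, ((k' i : ℝ)/n')^(k' i)) := le_trans hmono IH
    have key : (1/(Real.exp 1 * ((n:ℝ)+1))^2) * (1/(Real.exp 1 * ((n:ℝ)+1))^(2*m)) ≤
        ((n.choose b : ℝ) * ((b:ℝ)/n)^b * ((n':ℝ)/n)^(n')) *
        (((n'.factorial : ℝ) / ((k0.factorial : ℝ) * ∏ i, ((k' i).factorial : ℝ)))
          * (((k0:ℝ)/n')^k0 * ∏ i, ((k' i : ℝ)/n')^(k' i))) := by
      apply mul_le_mul hF1 hF2 (by positivity) _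
      have h0 : (0:ℝ) ≤ 1/(Real.exp 1 * ((n:ℝ)+1))^2 := by positivity
      calc (0:ℝ) ≤ 1/(Real.exp 1 * ((n:ℝ)+1))^2 := h0
        _ ≤ _ := hF1
    calc 1/(Real.exp 1 * ((n:ℝ)+1))^(2*(m+1))
        = (1/(Real.exp 1 * ((n:ℝ)+1))^2) * (1/(Real.exp 1 * ((n:ℝ)+1))^(2*m)) := by
          rw [div_mul_div_comm, one_mul, ← pow_add]
          congr 2
          ring
      _ ≤ _ := key
      _ = _ := by ring

lemma poly_lt_exp (m : ℕ) (hm : 1 ≤ m) (ε : ℝ) (hε : 0 < ε) :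
    ∃ N₂ : ℕ, ∀ n : ℕ, N₂ ≤ n → (Real.exp 1 * ((n:ℝ)+1))^(2*m) < Real.exp (ε*n) := by
  refine ⟨⌈(8*m/ε)^2⌉₊ + ⌈4*m/ε⌉₊ + 1, fun n hn => ?_⟩
  have hx : ((8*m/ε)^2 : ℝ) ≤ n := by
    have h1 : (⌈(8*m/ε)^2⌉₊ : ℕ) ≤ n := by omega
    calc ((8*m/ε)^2 : ℝ) ≤ (⌈(8*m/ε)^2⌉₊ : ℝ) := Nat.le_ceil _
      _ ≤ n := by exact_mod_cast h1
  have hy : (4*m/ε : ℝ) < n := by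
    have h1 : (⌈4*m/ε⌉₊ : ℕ) + 1 ≤ n := by omega
    calc (4*m/ε : ℝ) ≤ (⌈4*m/ε⌉₊ : ℝ) := Nat.le_ceil _
      _ < n := by exact_mod_cast h1
  have hn0 : (0:ℝ) ≤ n := Nat.cast_nonneg n
  set sn : ℝ := Real.sqrt n with hsn
  have hsq : sn^2 = n := Real.sq_sqrt hn0
  have hsnn : 0 ≤ sn := Real.sqrt_nonneg n
  have hsnlb : 8*m/ε ≤ sn := by
    have h8 : (0:ℝ) ≤ 8*m/ε := by positivity
    have := Real.sqrt_le_sqrt hx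
    rwa [Real.sqrt_sq h8] at this
  -- log bound
  have hlog : Real.log ((n:ℝ)+1) ≤ 2 * sn := by
    have h1 : Real.sqrt ((n:ℝ)+1) ≤ sn + 1 := by
      have h2 : ((n:ℝ)+1) ≤ (sn+1)^2 := by nlinarith
      calc Real.sqrt ((n:ℝ)+1) ≤ Real.sqrt ((sn+1)^2) := Real.sqrt_le_sqrt h2
        _ = sn + 1 := Real.sqrt_sq (by positivity)
    have h3 : Real.log ((n:ℝ)+1) = 2 * Real.log (Real.sqrt ((n:ℝ)+1)) := by
      rw [Real.log_sqrt (by positivity)]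
      ring
    have h4 : Real.log (Real.sqrt ((n:ℝ)+1)) ≤ Real.sqrt ((n:ℝ)+1) - 1 :=
      Real.log_le_sub_one_of_pos (Real.sqrt_pos.mpr (by positivity))
    calc Real.log ((n:ℝ)+1) = 2 * Real.log (Real.sqrt ((n:ℝ)+1)) := h3
      _ ≤ 2 * (Real.sqrt ((n:ℝ)+1) - 1) := by linarith
      _ ≤ 2 * sn := by linarith
  -- rewrite LHS as an exponential
  have hLHS : (Real.exp 1 * ((n:ℝ)+1))^(2*m) = Real.exp ((2*m) * (1 + Real.log ((n:ℝ)+1))) := by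
    have h1 : Real.exp 1 * ((n:ℝ)+1) = Real.exp (1 + Real.log ((n:ℝ)+1)) := by
      rw [Real.exp_add, Real.exp_log (by positivity)]
    rw [h1, ← Real.exp_nat_mul]
    norm_num
  rw [hLHS]
  apply Real.exp_lt_exp.mpr
  have hm1 : (1:ℝ) ≤ m := by exact_mod_cast hm
  have hb1 : 2*(m:ℝ) < ε * n / 2 := by
    have : 4*(m:ℝ) < ε * n := by
      have h := mul_lt_mul_of_pos_left hy hε
      have heq : ε * (4*(m:ℝ)/ε) = 4*(m:ℝ) := by field_simp
      rw [heq] at h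
      linarith
    linarith
  have hb2 : 4*(m:ℝ)*sn ≤ ε * n / 2 := by
    have h1 : 8*(m:ℝ) ≤ ε * sn := by
      have h := mul_le_mul_of_nonneg_left hsnlb (le_of_lt hε)
      have heq : ε * (8*(m:ℝ)/ε) = 8*(m:ℝ) := by field_simp
      rw [heq] at h
      linarith
    nlinarith
  calc (2*(m:ℝ)) * (1 + Real.log ((n:ℝ)+1)) ≤ (2*(m:ℝ)) * (1 + 2*sn) := by
        apply mul_le_mul_of_nonneg_left _ (by positivity)
        linarith
    _ = 2*(m:ℝ) + 4*(m:ℝ)*sn := by ring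
    _ < ε * n / 2 + ε * n / 2 := by linarith [hb1, hb2]
    _ = ε * n := by ring

end AuxLemmas

set_option maxHeartbeats 2000000 in
/-- Elliptic analogue of Lemma 3.1: for every `ε > 0` and `z ∈ (ℂ*)^m`, a positive
proportion (`≥ δ · binom(n+m,m)`) of the multi-indices `|J| ≤ n` satisfy
`C(n,J)^{1/2} |z^J| > (1+‖z‖²)^{n/2} e^{-εn}` for all large `n`. -/
theorem stmt_8 (m : ℕ) (hm : 1 ≤ m) :
    ∀ ε > (0 : ℝ), ∀ z : Fin m → ℂ, (∀ i, z i ≠ 0) →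
      ∃ δ > (0 : ℝ), ∃ N : ℕ, ∀ n ≥ N,
        δ * (Nat.choose (n + m) m : ℝ) ≤
          ((((Fintype.piFinset fun _ : Fin m => Finset.range (n + 1)).filter
              (fun J => ∑ i, J i ≤ n ∧
                (1 + ∑ i, ‖z i‖ ^ 2) ^ ((n : ℝ) / 2) * Real.exp (-ε * n) <
                  Real.sqrt (multiCoeff m n J) * ∏ i, ‖z i‖ ^ J i)).card : ℕ) :
            ℝ) := by
  intro ε hε z hz
  haveI : NeZero m := ⟨by omega⟩
  set a : Fin m → ℝ := fun i => ‖z i‖ with ha_def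
  have ha : ∀ i, 0 < a i := fun i => by
    simp only [ha_def]
    exact norm_pos_iff.mpr (hz i)
  set s : Fin m → ℝ := fun i => a i ^ 2 with hs_def
  have hs : ∀ i, 0 < s i := fun i => by simp only [hs_def]; exact pow_pos (ha i) 2
  set R : ℝ := 1 + ∑ i, s i with hR_def
  have hR : 0 < R := by
    have : 0 ≤ ∑ i, s i := Finset.sum_nonneg (fun i _ => le_of_lt (hs i))
    simp only [hR_def]; linarith
  set p : Fin m → ℝ := fun i => s i / R with hp_def
  have hp : ∀ i, 0 < p i := fun i => div_pos (hs i) hR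
  set p0 : ℝ := 1 / R with hp0_def
  have hp0 : 0 < p0 := by positivity
  have hsump : ∑ i, p i = 1 - p0 := by
    simp only [hp_def, hp0_def]
    rw [← Finset.sum_div]
    rw [eq_sub_iff_add_eq, ← add_div]
    rw [div_eq_one_iff_eq (ne_of_gt hR)]
    simp [hR_def, add_comm]
  -- minimum of the pᵢ and p0
  obtain ⟨i₀, -, hi₀⟩ := Finset.exists_min_image Finset.univ p
    (Finset.univ_nonempty (α := Fin m))
  set pm : ℝ := min p0 (p i₀) with hpm_def
  have hpm0 : 0 < pm := lt_min hp0 (hp i₀)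
  have hpmp0 : pm ≤ p0 := min_le_left _ _
  have hpmi : ∀ i, pm ≤ p i := fun i =>
    le_trans (min_le_right _ _) (hi₀ i (Finset.mem_univ i))
  set c : ℝ := Real.exp ε - 1 with hc_def
  have hc : 0 < c := by
    simp only [hc_def]
    have := Real.add_one_le_exp ε
    nlinarith [Real.exp_pos ε, Real.add_one_le_exp ε, hε]
  set θ : ℝ := pm * min c (1/m) with hθ_def
  have hm0 : (0:ℝ) < m := by exact_mod_cast hm
  have hθ0 : 0 < θ := by
    apply mul_pos hpm0
    apply lt_min hc
    positivity
  have hθc : ∀ i, θ ≤ c * p i := fun i => by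
    calc θ ≤ pm * c := mul_le_mul_of_nonneg_left (min_le_left _ _) (le_of_lt hpm0)
      _ ≤ p i * c := mul_le_mul_of_nonneg_right (hpmi i) (le_of_lt hc)
      _ = c * p i := mul_comm _ _
  have hθm : (m:ℝ) * θ ≤ p0 := by
    calc (m:ℝ) * θ ≤ (m:ℝ) * (pm * (1/m)) := by
          apply mul_le_mul_of_nonneg_left _ (le_of_lt hm0)
          exact mul_le_mul_of_nonneg_left (min_le_right _ _) (le_of_lt hpm0)
      _ = pm := by field_simp
      _ ≤ p0 := hpmp0
  obtain ⟨N₂, hN₂⟩ := poly_lt_exp m hm ε hε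
  refine ⟨(θ/4)^m, by positivity, max (max (⌈(2/θ)⌉₊) m) N₂, fun n hn => ?_⟩
  have hnm : m ≤ n := le_trans (le_trans (le_max_right _ _) (le_max_left _ _)) hn
  have hn1 : 1 ≤ n := le_trans hm hnm
  have hnR : (0:ℝ) < n := by exact_mod_cast hn1
  have hnθ : 2 ≤ θ * n := by
    have h1 : (⌈(2/θ)⌉₊ : ℕ) ≤ n := le_trans (le_trans (le_max_left _ _) (le_max_left _ _)) hn
    have h2 : (2/θ : ℝ) ≤ n := le_trans (Nat.le_ceil _) (by exact_mod_cast h1)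
    calc (2:ℝ) = θ * (2/θ) := by field_simp
      _ ≤ θ * n := mul_le_mul_of_nonneg_left h2 (le_of_lt hθ0)
  have hgrow : (Real.exp 1 * ((n:ℝ)+1))^(2*m) < Real.exp (ε*n) :=
    hN₂ n (le_trans (le_max_right _ _) hn)
  set t : ℕ := ⌊θ * n⌋₊ with ht_def
  have htub : (t:ℝ) ≤ θ * n := Nat.floor_le (by positivity)
  have htlb : θ * n / 2 ≤ (t:ℝ) := by
    have := Nat.sub_one_lt_floor (θ * n)
    simp only [← ht_def] at this
    linarith
  set A : Fin m → ℕ := fun i => ⌈(n:ℝ) * p i⌉₊ with hA_def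
  set box : Finset (Fin m → ℕ) :=
    Fintype.piFinset (fun i => Finset.Ico (A i) (A i + t)) with hbox_def
  -- per-element facts
  have hboxmem : ∀ J ∈ box, (∀ i, (n:ℝ) * p i ≤ J i) ∧ (∀ i, (J i : ℝ) ≤ (n:ℝ) * p i + t) := by
    intro J hJ
    rw [hbox_def, Fintype.mem_piFinset] at hJ
    constructor
    · intro i
      have h1 := (Finset.mem_Ico.mp (hJ i)).1
      calc (n:ℝ) * p i ≤ (A i : ℝ) := Nat.le_ceil _
        _ ≤ (J i : ℝ) := by exact_mod_cast h1
    · intro i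
      have h1 := (Finset.mem_Ico.mp (hJ i)).2
      have h2 : (J i : ℝ) + 1 ≤ (A i : ℝ) + t := by exact_mod_cast h1
      have h3 : (A i : ℝ) < (n:ℝ) * p i + 1 := Nat.ceil_lt_add_one (by positivity)
      linarith
  -- the main pointwise estimate
  have hmain : ∀ J ∈ box,
      ∑ i, J i ≤ n ∧
        (1 + ∑ i, ‖z i‖ ^ 2) ^ ((n : ℝ) / 2) * Real.exp (-ε * n) <
          Real.sqrt (multiCoeff m n J) * ∏ i, ‖z i‖ ^ J i := by
    intro J hJ
    obtain ⟨hJlow, hJup⟩ := hboxmem J hJ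
    have hJexp : ∀ i, (J i : ℝ) ≤ Real.exp ε * ((n:ℝ) * p i) := by
      intro i
      have h1 : (t:ℝ) ≤ c * ((n:ℝ) * p i) := by
        calc (t:ℝ) ≤ θ * n := htub
          _ ≤ (c * p i) * n := mul_le_mul_of_nonneg_right (hθc i) hnR.le
          _ = c * ((n:ℝ) * p i) := by ring
      have h2 := hJup i
      calc (J i:ℝ) ≤ (1 + c) * ((n:ℝ) * p i) := by linarith
        _ = Real.exp ε * ((n:ℝ) * p i) := by rw [hc_def]; ring
    have hsumJR : (∑ i, ((J i:ℝ))) ≤ (n:ℝ) * (1 - p0) + (m:ℝ) * t := by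
      calc (∑ i, ((J i:ℝ))) ≤ ∑ i, ((n:ℝ) * p i + t) :=
            Finset.sum_le_sum (fun i _ => by linarith [hJup i])
        _ = (n:ℝ) * (∑ i, p i) + (m:ℝ) * t := by
            rw [Finset.sum_add_distrib, ← Finset.mul_sum, Finset.sum_const,
              Finset.card_univ, Fintype.card_fin, nsmul_eq_mul]
        _ = (n:ℝ) * (1 - p0) + (m:ℝ) * t := by rw [hsump]
    have hsumJn : ∑ i, J i ≤ n := by
      have h1 : (m:ℝ) * t ≤ p0 * n := by
        calc (m:ℝ) * t ≤ (m:ℝ) * (θ * n) := by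
              apply mul_le_mul_of_nonneg_left htub (by positivity)
          _ = ((m:ℝ) * θ) * n := by ring
          _ ≤ p0 * n := mul_le_mul_of_nonneg_right hθm hnR.le
      have h2 : (∑ i, ((J i:ℝ))) ≤ (n:ℝ) := by
        calc (∑ i, ((J i:ℝ))) ≤ (n:ℝ) * (1 - p0) + (m:ℝ) * t := hsumJR
          _ ≤ (n:ℝ) * (1 - p0) + p0 * n := by linarith
          _ = (n:ℝ) := by ring
      have h3 : ((∑ i, J i : ℕ) : ℝ) ≤ (n:ℝ) := by push_cast; exact h2
      exact_mod_cast h3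
    set k0 : ℕ := n - ∑ i, J i with hk0_def
    have hk0sum : k0 + ∑ i, J i = n := Nat.sub_add_cancel hsumJn
    have hk0R : (k0:ℝ) = (n:ℝ) - ∑ i, ((J i:ℝ)) := by
      rw [hk0_def, Nat.cast_sub hsumJn]
      push_cast
      ring
    have hk0p : (k0:ℝ)/n ≤ p0 := by
      have h1 : (n:ℝ) * (1 - p0) ≤ ∑ i, ((J i:ℝ)) := by
        calc (n:ℝ) * (1 - p0) = (n:ℝ) * (∑ i, p i) := by rw [hsump]
          _ = ∑ i, (n:ℝ) * p i := Finset.mul_sum _ _ _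
          _ ≤ ∑ i, ((J i:ℝ)) := Finset.sum_le_sum (fun i _ => hJlow i)
      rw [div_le_iff₀ hnR]
      rw [hk0R]
      nlinarith
    have hME := multinomial_entropy m n J k0 hk0sum
    have hCeq : multiCoeff m n J
        = (n.factorial : ℝ) / ((k0.factorial : ℝ) * ∏ i, ((J i).factorial : ℝ)) := rfl
    have hCpos : 0 < multiCoeff m n J := by
      rw [hCeq]
      apply div_pos
      · exact_mod_cast n.factorial_pos
      · apply mul_pos
        · exact_mod_cast k0.factorial_pos
        · apply Finset.prod_pos
          intro i _
          exact_mod_cast (J i).factorial_pos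
    refine ⟨hsumJn, ?_⟩
    -- reduce to squares
    have hC0 : 0 ≤ multiCoeff m n J := hCpos.le
    apply lt_of_pow_lt_pow_left₀ 2 (by positivity)
    have hL2 : ((1 + ∑ i, ‖z i‖ ^ 2) ^ ((n : ℝ) / 2) * Real.exp (-ε * n))^2
        = R^n * (Real.exp (-ε*(n:ℝ)))^2 := by
      rw [mul_pow]
      congr 1
      rw [← Real.rpow_natCast ((1 + ∑ i, ‖z i‖ ^ 2) ^ ((n : ℝ) / 2)) 2]
      rw [← Real.rpow_mul (by positivity)]
      rw [show ((n:ℝ)/2 * ((2:ℕ):ℝ)) = ((n:ℕ):ℝ) by push_cast; ring]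
      rw [Real.rpow_natCast]
    have hR2 : (Real.sqrt (multiCoeff m n J) * ∏ i, ‖z i‖ ^ J i)^2
        = multiCoeff m n J * ∏ i, s i ^ J i := by
      rw [mul_pow, Real.sq_sqrt hC0]
      congr 1
      rw [← Finset.prod_pow]
      apply Finset.prod_congr rfl
      intro i _
      show (‖z i‖ ^ J i)^2 = (a i ^ 2) ^ (J i)
      rw [← pow_mul, ← pow_mul, Nat.mul_comm]
    rw [hL2, hR2]
    -- core chain
    have hps : ∀ i, s i = p i * R := by
      intro i
      simp only [hp_def]
      field_simp
    have hprod_s : ∏ i, s i ^ J i = (∏ i, p i ^ J i) * R^(∑ i, J i) := by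
      rw [← Finset.prod_pow_eq_pow_sum, ← Finset.prod_mul_distrib]
      apply Finset.prod_congr rfl
      intro i _
      rw [hps i, mul_pow]
    have hRn : (R:ℝ)^n = R^(∑ i, J i) * R^k0 := by
      rw [← pow_add]
      congr 1
      omega
    have hp0R : p0^k0 * R^k0 = 1 := by
      rw [← mul_pow, hp0_def, one_div, inv_mul_cancel₀ (ne_of_gt hR), one_pow]
    have hEeq : Real.exp (-ε*(n:ℝ)) = Real.exp (-ε)^n := by
      rw [show (-ε*(n:ℝ)) = ((n:ℕ):ℝ) * (-ε) by ring, Real.exp_nat_mul]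
    -- pointwise bound (J i / n) * exp(-ε) ≤ p i
    have e1 : ∀ i, ((J i:ℝ)/n) * Real.exp (-ε) ≤ p i := by
      intro i
      have h2 : (J i:ℝ) * Real.exp (-ε) ≤ (n:ℝ) * p i := by
        calc (J i:ℝ) * Real.exp (-ε)
            ≤ (Real.exp ε * ((n:ℝ) * p i)) * Real.exp (-ε) :=
              mul_le_mul_of_nonneg_right (hJexp i) (Real.exp_pos _).le
          _ = (Real.exp ε * Real.exp (-ε)) * ((n:ℝ) * p i) := by ring
          _ = (n:ℝ) * p i := by rw [← Real.exp_add]; simp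
      calc ((J i:ℝ)/n) * Real.exp (-ε) = ((J i:ℝ) * Real.exp (-ε))/n := by ring
        _ ≤ ((n:ℝ) * p i)/n := by
            exact (div_le_div_iff_of_pos_right hnR).mpr h2
        _ = p i := by field_simp
    have e2 : ∏ i, (((J i:ℝ)/n) * Real.exp (-ε))^(J i) ≤ ∏ i, p i ^ J i :=
      Finset.prod_le_prod (fun i _ => by positivity)
        (fun i _ => pow_le_pow_left₀
          (show (0:ℝ) ≤ ((J i:ℝ)/n) * Real.exp (-ε) by positivity) (e1 i) _)
    have e3 : ∏ i, (((J i:ℝ)/n) * Real.exp (-ε))^(J i)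
        = (∏ i, ((J i:ℝ)/n)^(J i)) * Real.exp (-ε)^(∑ i, J i) := by
      rw [← Finset.prod_pow_eq_pow_sum, ← Finset.prod_mul_distrib]
      apply Finset.prod_congr rfl
      intro i _
      rw [mul_pow]
    have e4 : Real.exp (-ε)^n ≤ Real.exp (-ε)^(∑ i, J i) := by
      apply pow_le_pow_of_le_one (Real.exp_pos _).le _ hsumJn
      calc Real.exp (-ε) ≤ Real.exp 0 := Real.exp_le_exp.mpr (by linarith)
        _ = 1 := Real.exp_zero
    have e5 : ((k0:ℝ)/n)^k0 ≤ p0^k0 :=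
      pow_le_pow_left₀ (show (0:ℝ) ≤ (k0:ℝ)/n by positivity) hk0p k0
    -- assemble
    have key1 : (((k0:ℝ)/n)^k0 * ∏ i, ((J i:ℝ)/n)^(J i)) * Real.exp (-ε)^n
        ≤ p0^k0 * ∏ i, p i ^ J i := by
      have h1 : (∏ i, ((J i:ℝ)/n)^(J i)) * Real.exp (-ε)^n ≤ ∏ i, p i ^ J i := by
        calc (∏ i, ((J i:ℝ)/n)^(J i)) * Real.exp (-ε)^n
            ≤ (∏ i, ((J i:ℝ)/n)^(J i)) * Real.exp (-ε)^(∑ i, J i) := by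
              apply mul_le_mul_of_nonneg_left e4
              apply Finset.prod_nonneg
              intro i _
              positivity
          _ = ∏ i, (((J i:ℝ)/n) * Real.exp (-ε))^(J i) := e3.symm
          _ ≤ ∏ i, p i ^ J i := e2
      calc (((k0:ℝ)/n)^k0 * ∏ i, ((J i:ℝ)/n)^(J i)) * Real.exp (-ε)^n
          = ((k0:ℝ)/n)^k0 * ((∏ i, ((J i:ℝ)/n)^(J i)) * Real.exp (-ε)^n) := by ring
        _ ≤ ((k0:ℝ)/n)^k0 * (∏ i, p i ^ J i) := by
            apply mul_le_mul_of_nonneg_left h1 (by positivity)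
        _ ≤ p0^k0 * ∏ i, p i ^ J i := by
            apply mul_le_mul_of_nonneg_right e5
            apply Finset.prod_nonneg
            intro i _
            exact pow_nonneg (hp i).le _
    have key2 : (1/(Real.exp 1 * ((n:ℝ)+1))^(2*m)) * Real.exp (-ε)^n
        ≤ multiCoeff m n J * (p0^k0 * ∏ i, p i ^ J i) := by
      calc (1/(Real.exp 1 * ((n:ℝ)+1))^(2*m)) * Real.exp (-ε)^n
          ≤ (multiCoeff m n J * (((k0:ℝ)/n)^k0 * ∏ i, ((J i:ℝ)/n)^(J i))) * Real.exp (-ε)^n := by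
            apply mul_le_mul_of_nonneg_right _ (by positivity)
            exact hME
        _ = multiCoeff m n J * ((((k0:ℝ)/n)^k0 * ∏ i, ((J i:ℝ)/n)^(J i)) * Real.exp (-ε)^n) := by
            ring
        _ ≤ multiCoeff m n J * (p0^k0 * ∏ i, p i ^ J i) :=
            mul_le_mul_of_nonneg_left key1 hC0
    have hstrict : Real.exp (-ε*(n:ℝ)) < 1/(Real.exp 1 * ((n:ℝ)+1))^(2*m) := by
      rw [show (-ε*(n:ℝ)) = -(ε*(n:ℝ)) by ring, Real.exp_neg, ← one_div]
      apply one_div_lt_one_div_of_lt (by positivity) hgrow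
    calc R^n * (Real.exp (-ε*(n:ℝ)))^2
        = (Real.exp (-ε*(n:ℝ)) * Real.exp (-ε*(n:ℝ))) * R^n := by ring
      _ < ((1/(Real.exp 1 * ((n:ℝ)+1))^(2*m)) * Real.exp (-ε*(n:ℝ))) * R^n := by
          apply mul_lt_mul_of_pos_right _ (by positivity)
          exact mul_lt_mul_of_pos_right hstrict (Real.exp_pos _)
      _ = ((1/(Real.exp 1 * ((n:ℝ)+1))^(2*m)) * Real.exp (-ε)^n) * R^n := by
          rw [hEeq]
      _ ≤ (multiCoeff m n J * (p0^k0 * ∏ i, p i ^ J i)) * R^n :=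
          mul_le_mul_of_nonneg_right key2 (by positivity)
      _ = multiCoeff m n J * ∏ i, s i ^ J i := by
          rw [hprod_s, hRn]
          linear_combination (multiCoeff m n J * ((∏ i, p i ^ J i) * R ^ (∑ i, J i))) * hp0R
  -- counting
  have hsub : box ⊆ (Fintype.piFinset fun _ : Fin m => Finset.range (n + 1)).filter
      (fun J => ∑ i, J i ≤ n ∧
        (1 + ∑ i, ‖z i‖ ^ 2) ^ ((n : ℝ) / 2) * Real.exp (-ε * n) <
          Real.sqrt (multiCoeff m n J) * ∏ i, ‖z i‖ ^ J i) := by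
    intro J hJ
    rw [Finset.mem_filter]
    have h1 := hmain J hJ
    refine ⟨?_, h1⟩
    rw [Fintype.mem_piFinset]
    intro i
    rw [Finset.mem_range]
    have h2 : J i ≤ ∑ j, J j :=
      Finset.single_le_sum (fun j _ => Nat.zero_le (J j)) (Finset.mem_univ i)
    omega
  have hcard : (box.card : ℝ) = (t:ℝ)^m := by
    rw [hbox_def, Fintype.card_piFinset]
    simp only [Nat.card_Ico, Nat.add_sub_cancel_left]
    rw [Finset.prod_const, Finset.card_univ, Fintype.card_fin]
    push_cast
    ring
  have hchoose : ((n+m).choose m : ℝ) ≤ ((n:ℝ) + m)^m := by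
    calc ((n+m).choose m : ℝ) ≤ (((n+m)^m : ℕ) : ℝ) := by
          exact_mod_cast Nat.choose_le_pow (n+m) m
      _ = ((n:ℝ) + m)^m := by push_cast; ring
  calc (θ/4)^m * ((n+m).choose m : ℝ) ≤ (θ/4)^m * ((n:ℝ) + m)^m := by
        apply mul_le_mul_of_nonneg_left hchoose (by positivity)
    _ = ((θ/4) * ((n:ℝ)+m))^m := by rw [mul_pow]
    _ ≤ (θ * n / 2)^m := by
        apply pow_le_pow_left₀ (by positivity)
        have : (m:ℝ) ≤ n := by exact_mod_cast hnm
        nlinarith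
    _ ≤ (t:ℝ)^m := pow_le_pow_left₀ (by positivity) htlb m
    _ = (box.card : ℝ) := hcard.symm
    _ ≤ _ := by
        have := Finset.card_le_card hsub
        exact_mod_cast this
end

section
/- Let m ≥ 1 and let (a_J)_{J∈ℕ^m} be i.i.d. complex random variables with E[(log(1+|a_J|))^m] < ∞, and for each n let G_n be the associated random elliptic polynomial of degree n. Then almost surely, for every z ∈ ℂ^m, limsup_{n→∞} (1/n) log|G_n(z)| ≤ (1/2) log(1+‖z‖²). -/
open MeasureTheory ProbabilityTheory Filter Asymptotics Topology
open scoped ENNReal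

namespace Stmt9Aux



def Tset (m n : ℕ) : Finset (Fin m → ℕ) :=
  (Fintype.piFinset fun _ : Fin m => Finset.range (n + 1)).filter
      (fun J => ∑ i, J i ≤ n)

lemma multiCoeff_nonneg (m n : ℕ) (J : Fin m → ℕ) : 0 ≤ multiCoeff m n J := by
  unfold multiCoeff; positivity

lemma multiCoeff_eq (m n : ℕ) (J : Fin m → ℕ) (hJ : ∑ i, J i ≤ n) :
    multiCoeff m n J
      = (Nat.multinomial Finset.univ (Fin.cons (n - ∑ i, J i) J) : ℝ) := by
  have spec := Nat.multinomial_spec (Finset.univ : Finset (Fin (m+1)))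
    (Fin.cons (n - ∑ i, J i) J)
  have hsum : ∑ i, Fin.cons (n - ∑ i, J i) J i = n := by
    rw [Fin.sum_univ_succ]; simp; omega
  have hprod : ∏ i, ((Fin.cons (n - ∑ i, J i) J : Fin (m+1) → ℕ) i).factorial
      = (n - ∑ i, J i).factorial * ∏ i, (J i).factorial := by
    rw [Fin.prod_univ_succ]; simp
  rw [hsum, hprod] at spec
  have hden : (((n - ∑ i, J i).factorial : ℝ) * ∏ i, ((J i).factorial : ℝ)) ≠ 0 := by
    positivity
  rw [multiCoeff, div_eq_iff hden]
  rw [← Nat.cast_prod, ← spec]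
  push_cast
  ring

lemma sum_multiCoeff_le (m n : ℕ) (w : Fin m → ℝ) (hw : ∀ i, 0 ≤ w i) :
    ∑ J ∈ Tset m n, multiCoeff m n J * ∏ i, w i ^ J i ≤ (1 + ∑ i, w i) ^ n := by
  classical
  set φ : (Fin m → ℕ) → (Fin (m+1) → ℕ) := fun J => Fin.cons (n - ∑ i, J i) J with hφ
  set f : Fin (m+1) → ℝ := Fin.cons 1 w with hf
  set g : (Fin (m+1) → ℕ) → ℝ :=
    fun K => (Nat.multinomial Finset.univ K : ℝ) * ∏ i, f i ^ K i with hg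
  have hterm : ∀ J ∈ Tset m n, multiCoeff m n J * ∏ i, w i ^ J i = g (φ J) := by
    intro J hJ
    have hJn : ∑ i, J i ≤ n := (Finset.mem_filter.1 hJ).2
    rw [multiCoeff_eq m n J hJn, hg]
    congr 1
    rw [Fin.prod_univ_succ]
    simp [hφ, hf]
  rw [Finset.sum_congr rfl hterm]
  have hinj : Set.InjOn φ (Tset m n) := by
    intro J _ J' _ h
    funext i
    have := congrFun h i.succ
    simpa [hφ] using this
  rw [← Finset.sum_image (fun x hx y hy h => hinj hx hy h)]
  have hsub : (Tset m n).image φ ⊆ Finset.piAntidiag Finset.univ n := by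
    intro K hK
    obtain ⟨J, hJ, rfl⟩ := Finset.mem_image.1 hK
    have hJn : ∑ i, J i ≤ n := (Finset.mem_filter.1 hJ).2
    rw [Finset.mem_piAntidiag]
    constructor
    · rw [Fin.sum_univ_succ]; simp [hφ]; omega
    · intro i _; exact Finset.mem_univ i
  have hnn : ∀ K ∈ Finset.piAntidiag Finset.univ n, K ∉ (Tset m n).image φ → 0 ≤ g K := by
    intro K _ _
    have hfnn : ∀ i, 0 ≤ f i := by
      intro i
      induction i using Fin.cases with
      | zero => simp [hf]
      | succ j => simpa [hf] using hw j
    exact mul_nonneg (Nat.cast_nonneg _)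
      (Finset.prod_nonneg fun i _ => pow_nonneg (hfnn i) _)
  calc ∑ K ∈ (Tset m n).image φ, g K
      ≤ ∑ K ∈ Finset.piAntidiag Finset.univ n, g K :=
        Finset.sum_le_sum_of_subset_of_nonneg hsub hnn
    _ = (∑ i, f i) ^ n := (Finset.sum_pow_eq_sum_piAntidiag Finset.univ f n).symm
    _ = (1 + ∑ i, w i) ^ n := by rw [Fin.sum_univ_succ]; simp [hf]

lemma abs_sum_le (m n : ℕ) (b : (Fin m → ℕ) → ℂ) (z : Fin m → ℂ) (B : ℝ)
    (hB0 : 0 ≤ B) (hB : ∀ J ∈ Tset m n, ‖b J‖ ≤ B) :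
    ‖∑ J ∈ Tset m n,
        b J * (Real.sqrt (multiCoeff m n J) : ℂ) * ∏ i, z i ^ J i‖
      ≤ B * Real.sqrt (((n+1)^m : ℕ) * (1 + ∑ i, ‖z i‖ ^ 2) ^ n) := by
  classical
  set x : (Fin m → ℕ) → ℝ := fun J => ∏ i, ‖z i‖ ^ J i with hx
  have hx0 : ∀ J, 0 ≤ x J := fun J =>
    Finset.prod_nonneg fun i _ => pow_nonneg (norm_nonneg _) _
  have habs : ∀ J, ‖b J * (Real.sqrt (multiCoeff m n J) : ℂ) * ∏ i, z i ^ J i‖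
      = ‖b J‖ * Real.sqrt (multiCoeff m n J) * x J := by
    intro J
    rw [norm_mul, norm_mul, Complex.norm_real, Real.norm_of_nonneg (Real.sqrt_nonneg _)]
    congr 1
    rw [norm_prod]
    exact Finset.prod_congr rfl fun i _ => norm_pow _ _
  have h1 : ‖∑ J ∈ Tset m n,
        b J * (Real.sqrt (multiCoeff m n J) : ℂ) * ∏ i, z i ^ J i‖
      ≤ ∑ J ∈ Tset m n, B * (Real.sqrt (multiCoeff m n J) * x J) := by
    refine (norm_sum_le _ _).trans (Finset.sum_le_sum fun J hJ => ?_)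
    rw [habs J, mul_assoc]
    exact mul_le_mul_of_nonneg_right (hB J hJ)
      (mul_nonneg (Real.sqrt_nonneg _) (hx0 J))
  rw [← Finset.mul_sum] at h1
  refine h1.trans (mul_le_mul_of_nonneg_left ?_ hB0)
  -- Cauchy-Schwarz step
  have hS0 : 0 ≤ ∑ J ∈ Tset m n, Real.sqrt (multiCoeff m n J) * x J :=
    Finset.sum_nonneg fun J _ => mul_nonneg (Real.sqrt_nonneg _) (hx0 J)
  rw [Real.le_sqrt hS0 (by positivity)]
  calc (∑ J ∈ Tset m n, Real.sqrt (multiCoeff m n J) * x J) ^ 2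
      ≤ (Tset m n).card * ∑ J ∈ Tset m n, (Real.sqrt (multiCoeff m n J) * x J) ^ 2 :=
        sq_sum_le_card_mul_sum_sq
    _ ≤ ((n+1)^m : ℕ) * (1 + ∑ i, ‖z i‖ ^ 2) ^ n := by
        have hcard : ((Tset m n).card : ℝ) ≤ (((n+1)^m : ℕ) : ℝ) := by
          have : (Tset m n).card ≤ (n+1)^m := by
            calc (Tset m n).card
                ≤ (Fintype.piFinset fun _ : Fin m => Finset.range (n + 1)).card :=
                  Finset.card_le_card (Finset.filter_subset _ _)
              _ = (n+1)^m := by simp [Fintype.card_piFinset]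
          exact_mod_cast this
        have hsum2 : ∑ J ∈ Tset m n, (Real.sqrt (multiCoeff m n J) * x J) ^ 2
            ≤ (1 + ∑ i, ‖z i‖ ^ 2) ^ n := by
          have : ∀ J ∈ Tset m n, (Real.sqrt (multiCoeff m n J) * x J) ^ 2
              = multiCoeff m n J * ∏ i, (‖z i‖ ^ 2) ^ J i := by
            intro J _
            rw [mul_pow, Real.sq_sqrt (multiCoeff_nonneg m n J)]
            congr 1
            rw [hx, ← Finset.prod_pow]
            exact Finset.prod_congr rfl fun i _ => by ring
          rw [Finset.sum_congr rfl this]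
          exact sum_multiCoeff_le m n _ fun i => sq_nonneg _
        have h2nn : (0:ℝ) ≤ ∑ J ∈ Tset m n, (Real.sqrt (multiCoeff m n J) * x J) ^ 2 :=
          Finset.sum_nonneg fun J _ => sq_nonneg _
        calc ((Tset m n).card : ℝ) * ∑ J ∈ Tset m n, (Real.sqrt (multiCoeff m n J) * x J) ^ 2
            ≤ (((n+1)^m : ℕ) : ℝ) * ∑ J ∈ Tset m n, (Real.sqrt (multiCoeff m n J) * x J) ^ 2 :=
              mul_le_mul_of_nonneg_right hcard h2nn
          _ ≤ ((n+1)^m : ℕ) * (1 + ∑ i, ‖z i‖ ^ 2) ^ n :=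
              mul_le_mul_of_nonneg_left hsum2 (by positivity)
lemma log_sum_le (m n : ℕ) (b : (Fin m → ℕ) → ℂ) (z : Fin m → ℂ) (E : ℝ)
    (hE : 0 ≤ E) (hB : ∀ J ∈ Tset m n, ‖b J‖ ≤ Real.exp E) :
    Real.log (‖∑ J ∈ Tset m n,
        b J * (Real.sqrt (multiCoeff m n J) : ℂ) * ∏ i, z i ^ J i‖)
      ≤ E + (m/2) * Real.log ((n:ℝ)+1)
        + (n/2) * Real.log (1 + ∑ i, ‖z i‖ ^ 2) := by
  set s := ∑ i, ‖z i‖ ^ 2 with hs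
  have hs0 : (0:ℝ) ≤ s := Finset.sum_nonneg fun i _ => sq_nonneg _
  set R : ℝ := (((n+1)^m : ℕ) : ℝ) * (1 + s) ^ n with hR
  have hR1 : (1:ℝ) ≤ R := by
    have h1 : (1:ℝ) ≤ (((n+1)^m : ℕ) : ℝ) := by
      have : 1 ≤ (n+1)^m := Nat.one_le_pow _ _ (Nat.succ_pos n)
      exact_mod_cast this
    have h2 : (1:ℝ) ≤ (1 + s) ^ n := one_le_pow₀ (by linarith)
    nlinarith
  have hRpos : (0:ℝ) < R := lt_of_lt_of_le one_pos hR1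
  have hbound := abs_sum_le m n b z (Real.exp E) (Real.exp_nonneg E) hB
  have hrhs1 : (1:ℝ) ≤ Real.exp E * Real.sqrt R := by
    have : (1:ℝ) ≤ Real.sqrt R := by
      rw [show (1:ℝ) = Real.sqrt 1 by simp]
      exact Real.sqrt_le_sqrt hR1
    nlinarith [Real.one_le_exp hE]
  have hlog : Real.log (‖∑ J ∈ Tset m n,
      b J * (Real.sqrt (multiCoeff m n J) : ℂ) * ∏ i, z i ^ J i‖)
      ≤ Real.log (Real.exp E * Real.sqrt R) := by
    rcases eq_or_lt_of_le (norm_nonneg (∑ J ∈ Tset m n,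
      b J * (Real.sqrt (multiCoeff m n J) : ℂ) * ∏ i, z i ^ J i)) with h | h
    · rw [← h, Real.log_zero]
      exact Real.log_nonneg hrhs1
    · exact Real.log_le_log h hbound
  refine hlog.trans ?_
  rw [Real.log_mul (Real.exp_ne_zero E) (by positivity), Real.log_exp,
    Real.log_sqrt hRpos.le, hR,
    Real.log_mul (by positivity) (by positivity), Real.log_pow]
  have hcast : Real.log ((((n+1)^m : ℕ)) : ℝ) = m * Real.log ((n:ℝ)+1) := by
    rw [Nat.cast_pow, Real.log_pow]
    push_cast
    ring
  rw [hcast]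
  linarith


noncomputable def Lf : ℂ → ℝ := fun x => Real.log (1 + ‖x‖)

lemma Lf_meas : Measurable Lf :=
  Real.measurable_log.comp (measurable_const.add continuous_norm.measurable)

lemma Lf_nonneg (x : ℂ) : 0 ≤ Lf x :=
  Real.log_nonneg (le_add_of_nonneg_right (norm_nonneg x))

lemma bc {Ω : Type*} [MeasurableSpace Ω] {μ : Measure Ω} [IsProbabilityMeasure μ]
    (m : ℕ) (a : (Fin m → ℕ) → Ω → ℂ)
    (hmeas : ∀ J, Measurable (a J))
    (hident : ∀ J, IdentDistrib (a J) (a 0) μ μ)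
    (hmom : ∫⁻ ω, ENNReal.ofReal ((Real.log (1 + ‖a 0 ω‖)) ^ m) ∂μ < ⊤)
    (k : ℕ) :
    ∀ᵐ ω ∂μ, {J : Fin m → ℕ | (∑ i, J i : ℝ) < ((k:ℝ)+1) * Lf (a J ω)}.Finite := by
  classical
  set A : (Fin m → ℕ) → Set Ω :=
    fun J => {ω | (∑ i, J i : ℝ) < ((k:ℝ)+1) * Lf (a J ω)} with hA
  set A0 : (Fin m → ℕ) → Set Ω :=
    fun J => {ω | (∑ i, J i : ℝ) < ((k:ℝ)+1) * Lf (a 0 ω)} with hA0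
  have hAmeas : ∀ J, MeasurableSet (A J) := fun J =>
    measurableSet_lt measurable_const (measurable_const.mul (Lf_meas.comp (hmeas J)))
  have hA0meas : ∀ J, MeasurableSet (A0 J) := fun J =>
    measurableSet_lt measurable_const (measurable_const.mul (Lf_meas.comp (hmeas 0)))
  have hApro : ∀ J, μ (A J) = μ (A0 J) := by
    intro J
    have hsm : MeasurableSet {x : ℂ | (∑ i, J i : ℝ) < ((k:ℝ)+1) * Lf x} :=
      measurableSet_lt measurable_const (measurable_const.mul Lf_meas)
    exact (hident J).measure_mem_eq hsm
  -- pointwise identification of the indicator tsum with encard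
  have hpt : ∀ (b : (Fin m → ℕ) → Ω → ℂ) (ω : Ω),
      (∑' J : Fin m → ℕ,
        ({ω' | (∑ i, J i : ℝ) < ((k:ℝ)+1) * Lf (b J ω')}).indicator
          (fun _ => (1:ℝ≥0∞)) ω)
      = ({J : Fin m → ℕ | (∑ i, J i : ℝ) < ((k:ℝ)+1) * Lf (b J ω)}).encard := by
    intro b ω
    have hJ : ∀ J : Fin m → ℕ,
        ({ω' | (∑ i, J i : ℝ) < ((k:ℝ)+1) * Lf (b J ω')}).indicator
          (fun _ => (1:ℝ≥0∞)) ω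
        = ({J' : Fin m → ℕ | (∑ i, J' i : ℝ) < ((k:ℝ)+1) * Lf (b J' ω)}).indicator
          (fun _ => (1:ℝ≥0∞)) J := by
      intro J
      simp only [Set.indicator_apply, Set.mem_setOf_eq]
    rw [tsum_congr hJ, ← tsum_subtype, ENNReal.tsum_set_one]
  -- bound the count pointwise
  have hcount : ∀ ω : Ω,
      (({J : Fin m → ℕ | (∑ i, J i : ℝ) < ((k:ℝ)+1) * Lf (a 0 ω)}).encard : ℝ≥0∞)
        ≤ ENNReal.ofReal ((((k:ℝ)+1) * (Lf (a 0 ω) + 1)) ^ m) := by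
    intro ω
    set x := Lf (a 0 ω) with hx
    have hx0 : 0 ≤ x := Lf_nonneg _
    set N : ℕ := Nat.floor (((k:ℝ)+1) * x) + 1 with hN
    have hsub : {J : Fin m → ℕ | (∑ i, J i : ℝ) < ((k:ℝ)+1) * x}
        ⊆ ((Fintype.piFinset fun _ : Fin m => Finset.range N : Finset (Fin m → ℕ))
          : Set (Fin m → ℕ)) := by
      intro J hJ
      simp only [Set.mem_setOf_eq] at hJ
      simp only [Finset.coe_sort_coe, Finset.mem_coe, Fintype.mem_piFinset,
        Finset.mem_range]
      intro i
      have h1 : J i ≤ ∑ j, J j := Finset.single_le_sum (fun j _ => Nat.zero_le _)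
        (Finset.mem_univ i)
      have h2 : ((J i : ℝ)) ≤ ((k:ℝ)+1) * x := by
        calc ((J i : ℝ)) ≤ ((∑ j, J j : ℕ) : ℝ) := by exact_mod_cast h1
          _ ≤ ((k:ℝ)+1) * x := by push_cast; exact le_of_lt hJ
      have := Nat.le_floor h2
      omega
    have h1 : ({J : Fin m → ℕ | (∑ i, J i : ℝ) < ((k:ℝ)+1) * x}).encard
        ≤ ((N ^ m : ℕ) : ℕ∞) := by
      calc ({J : Fin m → ℕ | (∑ i, J i : ℝ) < ((k:ℝ)+1) * x}).encard
          ≤ ((Fintype.piFinset fun _ : Fin m => Finset.range N : Finset (Fin m → ℕ))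
            : Set (Fin m → ℕ)).encard := Set.encard_mono hsub
        _ = ((Fintype.piFinset fun _ : Fin m => Finset.range N).card : ℕ∞) :=
            Set.encard_coe_eq_coe_finsetCard _
        _ = ((N ^ m : ℕ) : ℕ∞) := by simp [Fintype.card_piFinset]
    have h2 : (({J : Fin m → ℕ | (∑ i, J i : ℝ) < ((k:ℝ)+1) * x}).encard : ℝ≥0∞)
        ≤ ((N ^ m : ℕ) : ℝ≥0∞) := by
      have := ENat.toENNReal_le.2 h1
      simpa using this
    refine h2.trans ?_
    have hNle : ((N : ℝ)) ≤ ((k:ℝ)+1) * (x + 1) := by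
      have hfl : (Nat.floor (((k:ℝ)+1) * x) : ℝ) ≤ ((k:ℝ)+1) * x :=
        Nat.floor_le (by positivity)
      have : (N : ℝ) = (Nat.floor (((k:ℝ)+1) * x) : ℝ) + 1 := by
        rw [hN]; push_cast; ring
      rw [this]
      nlinarith
    calc ((N ^ m : ℕ) : ℝ≥0∞) = ((N : ℝ≥0∞)) ^ m := by push_cast; ring
      _ = (ENNReal.ofReal (N : ℝ)) ^ m := by rw [ENNReal.ofReal_natCast]
      _ ≤ (ENNReal.ofReal (((k:ℝ)+1) * (x + 1))) ^ m :=
          pow_le_pow_left₀ (by positivity) (ENNReal.ofReal_le_ofReal hNle) m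
      _ = ENNReal.ofReal ((((k:ℝ)+1) * (x + 1)) ^ m) :=
          (ENNReal.ofReal_pow (by positivity) m).symm
  -- the total mass is finite
  have hsum : ∑' J : Fin m → ℕ, μ (A J) < ⊤ := by
    have hstep : ∑' J : Fin m → ℕ, μ (A J)
        = ∫⁻ ω, ∑' J : Fin m → ℕ, (A0 J).indicator (fun _ => (1:ℝ≥0∞)) ω ∂μ := by
      rw [lintegral_tsum fun J =>
        (measurable_const.indicator (hA0meas J)).aemeasurable]
      refine tsum_congr fun J => ?_
      rw [hApro J, lintegral_indicator_const (hA0meas J), one_mul]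
    rw [hstep]
    have hbd : ∫⁻ ω, ∑' J : Fin m → ℕ, (A0 J).indicator (fun _ => (1:ℝ≥0∞)) ω ∂μ
        ≤ ∫⁻ ω, ENNReal.ofReal ((((k:ℝ)+1)^m * 2^(m-1)))
            * (ENNReal.ofReal ((Lf (a 0 ω))^m) + 1) ∂μ := by
      refine lintegral_mono fun ω => ?_
      rw [hpt (fun _ => a 0) ω]
      refine (hcount ω).trans ?_
      set x := Lf (a 0 ω) with hx
      have hx0 : 0 ≤ x := Lf_nonneg _
      have hr : ((((k:ℝ)+1) * (x + 1)) ^ m)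
          ≤ (((k:ℝ)+1)^m * 2^(m-1)) * ((x^m) + 1) := by
        rw [mul_pow]
        have h3 : (x + 1) ^ m ≤ 2^(m-1) * (x^m + 1^m) := add_pow_le hx0 zero_le_one m
        have h4 : (0:ℝ) ≤ ((k:ℝ)+1)^m := by positivity
        calc ((k:ℝ)+1)^m * (x + 1) ^ m ≤ ((k:ℝ)+1)^m * (2^(m-1) * (x^m + 1^m)) :=
              mul_le_mul_of_nonneg_left h3 h4
          _ = (((k:ℝ)+1)^m * 2^(m-1)) * ((x^m) + 1) := by ring
      calc ENNReal.ofReal ((((k:ℝ)+1) * (x + 1)) ^ m)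
          ≤ ENNReal.ofReal ((((k:ℝ)+1)^m * 2^(m-1)) * ((x^m) + 1)) :=
            ENNReal.ofReal_le_ofReal hr
        _ = ENNReal.ofReal ((((k:ℝ)+1)^m * 2^(m-1))) * ENNReal.ofReal ((x^m) + 1) :=
            ENNReal.ofReal_mul (by positivity)
        _ = ENNReal.ofReal ((((k:ℝ)+1)^m * 2^(m-1))) * (ENNReal.ofReal (x^m) + 1) := by
            rw [ENNReal.ofReal_add (by positivity) zero_le_one, ENNReal.ofReal_one]
    refine lt_of_le_of_lt hbd ?_
    rw [lintegral_const_mul' _ _ ENNReal.ofReal_ne_top,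
      lintegral_add_right _ measurable_const, lintegral_one, measure_univ]
    exact ENNReal.mul_lt_top ENNReal.ofReal_lt_top
      (ENNReal.add_lt_top.2 ⟨hmom, ENNReal.one_lt_top⟩)
  -- conclude via a.e. finiteness
  set F : Ω → ℝ≥0∞ :=
    fun ω => ∑' J : Fin m → ℕ, (A J).indicator (fun _ => (1:ℝ≥0∞)) ω with hF
  have hFmeas : Measurable F :=
    Measurable.ennreal_tsum fun J => measurable_const.indicator (hAmeas J)
  have hFint : ∫⁻ ω, F ω ∂μ ≠ ⊤ := by
    rw [hF]
    rw [lintegral_tsum fun J => (measurable_const.indicator (hAmeas J)).aemeasurable]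
    have : ∑' J : Fin m → ℕ, ∫⁻ ω, (A J).indicator (fun _ => (1:ℝ≥0∞)) ω ∂μ
        = ∑' J : Fin m → ℕ, μ (A J) := by
      refine tsum_congr fun J => ?_
      rw [lintegral_indicator_const (hAmeas J), one_mul]
    rw [this]
    exact hsum.ne
  filter_upwards [ae_lt_top hFmeas hFint] with ω hω
  have hω' : (∑' J : Fin m → ℕ,
      ({ω' | (∑ i, J i : ℝ) < ((k:ℝ)+1) * Lf (a J ω')}).indicator
        (fun _ => (1:ℝ≥0∞)) ω) < ⊤ := hω
  rw [hpt a ω] at hω'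
  refine Set.encard_lt_top_iff.1 ?_
  have h2 := hω'
  rw [← ENat.toENNReal_top, ENat.toENNReal_lt] at h2
  exact h2



lemma tendsto_logdiv (C D : ℝ) :
    Tendsto (fun n : ℕ => (C + D * Real.log ((n:ℝ)+1)) / n) atTop (𝓝 0) := by
  have hg : Tendsto (fun n : ℕ => (n:ℝ)) atTop atTop := tendsto_natCast_atTop_atTop
  have h1 : (fun n : ℕ => Real.log ((n:ℝ)+1)) =o[atTop] (fun n : ℕ => ((n:ℝ)+1)) :=
    Real.isLittleO_log_id_atTop.comp_tendsto
      (tendsto_atTop_add_const_right atTop 1 hg)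
  have h2 : (fun n : ℕ => ((n:ℝ)+1)) =O[atTop] (fun n : ℕ => (n:ℝ)) := by
    rw [isBigO_iff]
    refine ⟨2, ?_⟩
    filter_upwards [eventually_ge_atTop 1] with n hn
    have : (1:ℝ) ≤ (n:ℝ) := by exact_mod_cast hn
    rw [Real.norm_eq_abs, Real.norm_eq_abs, abs_of_nonneg (by linarith),
      abs_of_nonneg (by linarith)]
    linarith
  have h3 : Tendsto (fun n : ℕ => Real.log ((n:ℝ)+1) / (n:ℝ)) atTop (𝓝 0) :=
    (h1.trans_isBigO h2).tendsto_div_nhds_zero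
  have h4 : Tendsto (fun n : ℕ => C / (n:ℝ)) atTop (𝓝 0) :=
    Tendsto.div_atTop tendsto_const_nhds hg
  have := h4.add (h3.const_mul D)
  rw [show (0:ℝ) + D * 0 = 0 by ring] at this
  refine this.congr fun n => ?_
  ring

end Stmt9Aux

/-- Step 1 (upper bound) in the proof of Theorem 1.1, elliptic ensemble: if
`E[(log(1+|a_J|))^m] < ∞` then almost surely, for every `z ∈ ℂ^m`,
`limsup_n (1/n) log|G_n(z)| ≤ (1/2) log(1+‖z‖²)`. -/
theorem stmt_9 {Ω : Type*} [MeasurableSpace Ω] {μ : Measure Ω} [IsProbabilityMeasure μ]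
    (m : ℕ) (hm : 1 ≤ m) (a : (Fin m → ℕ) → Ω → ℂ)
    (hmeas : ∀ J, Measurable (a J))
    (hindep : iIndepFun a μ)
    (hident : ∀ J, IdentDistrib (a J) (a 0) μ μ)
    (hmom : ∫⁻ ω, ENNReal.ofReal ((Real.log (1 + ‖a 0 ω‖)) ^ m) ∂μ < ⊤) :
    ∀ᵐ ω ∂μ, ∀ z : Fin m → ℂ,
      Filter.limsup (fun n : ℕ =>
          (((1 / n : ℝ) * Real.log (‖ellipticPoly a n ω z‖) : ℝ) : EReal))
        atTop ≤
        (((1 / 2) * Real.log (1 + ∑ i, ‖z i‖ ^ 2) : ℝ) : EReal) := by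
  classical
  have hbc : ∀ᵐ ω ∂μ, ∀ k : ℕ,
      {J : Fin m → ℕ | (∑ i, J i : ℝ) < ((k:ℝ)+1) * Stmt9Aux.Lf (a J ω)}.Finite :=
    (ae_all_iff).2 fun k => Stmt9Aux.bc m a hmeas hident hmom k
  filter_upwards [hbc] with ω hω
  intro z
  set s := ∑ i, ‖z i‖ ^ 2 with hs
  have hs0 : (0:ℝ) ≤ s := Finset.sum_nonneg fun i _ => sq_nonneg _
  set V : ℝ := 1 / 2 * Real.log (1 + s) with hV
  have hV0 : 0 ≤ V := mul_nonneg (by norm_num) (Real.log_nonneg (by linarith))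
  set u : ℕ → EReal := fun n =>
    (((1 / n : ℝ) * Real.log (‖ellipticPoly a n ω z‖) : ℝ) : EReal) with hu
  have hk : ∀ k : ℕ, Filter.limsup u atTop ≤ (((1/((k:ℝ)+1) + V : ℝ)) : EReal) := by
    intro k
    have hk1 : (0:ℝ) < (k:ℝ)+1 := by positivity
    obtain ⟨C, hC0, hC⟩ : ∃ C : ℝ, 0 ≤ C ∧
        ∀ J : Fin m → ℕ, Stmt9Aux.Lf (a J ω) ≤ (∑ i, J i : ℝ)/((k:ℝ)+1) + C := by
      obtain ⟨C₀, hC₀⟩ := ((hω k).image fun J => Stmt9Aux.Lf (a J ω)).bddAbove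
      refine ⟨max C₀ 0, le_max_right _ _, fun J => ?_⟩
      by_cases hJ : (∑ i, J i : ℝ) < ((k:ℝ)+1) * Stmt9Aux.Lf (a J ω)
      · have hmem : Stmt9Aux.Lf (a J ω) ∈
            (fun J => Stmt9Aux.Lf (a J ω)) ''
              {J : Fin m → ℕ | (∑ i, J i : ℝ) < ((k:ℝ)+1) * Stmt9Aux.Lf (a J ω)} :=
          Set.mem_image_of_mem _ hJ
        have h1 : Stmt9Aux.Lf (a J ω) ≤ C₀ := hC₀ hmem
        have hdiv : (0:ℝ) ≤ (∑ i, J i : ℝ)/((k:ℝ)+1) := by positivity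
        calc Stmt9Aux.Lf (a J ω) ≤ C₀ := h1
          _ ≤ max C₀ 0 := le_max_left _ _
          _ ≤ _ := le_add_of_nonneg_left hdiv
      · push_neg at hJ
        have h1 : Stmt9Aux.Lf (a J ω) ≤ (∑ i, J i : ℝ)/((k:ℝ)+1) := by
          rw [le_div_iff₀ hk1]; linarith
        exact h1.trans (le_add_of_nonneg_right (le_max_right _ _))
    have hub : ∀ n : ℕ, 1 ≤ n →
        (1 / (n:ℝ)) * Real.log (‖ellipticPoly a n ω z‖)
          ≤ 1/((k:ℝ)+1) + (C + ((m:ℝ)/2) * Real.log ((n:ℝ)+1))/(n:ℝ) + V := by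
      intro n hn
      have hnpos : (0:ℝ) < (n:ℝ) := by exact_mod_cast Nat.pos_of_ne_zero (by omega)
      set E : ℝ := (n:ℝ)/((k:ℝ)+1) + C with hE
      have hE0 : 0 ≤ E := by positivity
      have hBJ : ∀ J ∈ Stmt9Aux.Tset m n, ‖a J ω‖ ≤ Real.exp E := by
        intro J hJ
        have hJn : ∑ i, J i ≤ n := (Finset.mem_filter.1 hJ).2
        have h1 : ‖a J ω‖ ≤ Real.exp (Stmt9Aux.Lf (a J ω)) := by
          rw [Stmt9Aux.Lf, Real.exp_log (by positivity)]
          linarith [norm_nonneg (a J ω)]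
        refine h1.trans (Real.exp_le_exp.2 ?_)
        refine (hC J).trans ?_
        have h2 : (∑ i, J i : ℝ) ≤ (n:ℝ) := by exact_mod_cast hJn
        rw [hE]
        gcongr
      have hlog := Stmt9Aux.log_sum_le m n (fun J => a J ω) z E hE0 hBJ
      have hEq : ellipticPoly a n ω z = ∑ J ∈ Stmt9Aux.Tset m n,
          a J ω * (Real.sqrt (multiCoeff m n J) : ℂ) * ∏ i, z i ^ J i := rfl
      rw [hEq]
      calc (1 / (n:ℝ)) * Real.log (‖∑ J ∈ Stmt9Aux.Tset m n,
              a J ω * (Real.sqrt (multiCoeff m n J) : ℂ) * ∏ i, z i ^ J i‖)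
          ≤ (1 / (n:ℝ)) * (E + ((m:ℝ)/2) * Real.log ((n:ℝ)+1)
              + ((n:ℝ)/2) * Real.log (1 + s)) :=
            mul_le_mul_of_nonneg_left hlog (by positivity)
        _ = 1/((k:ℝ)+1) + (C + ((m:ℝ)/2) * Real.log ((n:ℝ)+1))/(n:ℝ) + V := by
            rw [hE, hV]
            field_simp
            ring
    set v : ℕ → ℝ :=
      fun n => 1/((k:ℝ)+1) + (C + ((m:ℝ)/2) * Real.log ((n:ℝ)+1))/(n:ℝ) + V with hv
    have hvt : Tendsto v atTop (𝓝 (1/((k:ℝ)+1) + V)) := by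
      have h := ((tendsto_const_nhds :
          Tendsto (fun _ : ℕ => 1/((k:ℝ)+1)) atTop _).add
          (Stmt9Aux.tendsto_logdiv C ((m:ℝ)/2))).add
          (tendsto_const_nhds : Tendsto (fun _ : ℕ => V) atTop _)
      rw [show (1/((k:ℝ)+1) + 0) + V = 1/((k:ℝ)+1) + V from by ring] at h
      exact h
    have hvE : Tendsto (fun n => ((v n : ℝ) : EReal)) atTop
        (𝓝 (((1/((k:ℝ)+1) + V : ℝ)) : EReal)) :=
      (continuous_coe_real_ereal.tendsto _).comp hvt
    have hle : Filter.limsup u atTop ≤ Filter.limsup (fun n => ((v n : ℝ) : EReal)) atTop := by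
      refine limsup_le_limsup ?_
      filter_upwards [eventually_ge_atTop 1] with n hn
      exact EReal.coe_le_coe_iff.2 (hub n hn)
    rw [hvE.limsup_eq] at hle
    exact hle
  have hVt : Tendsto (fun k : ℕ => (((1/((k:ℝ)+1) + V : ℝ)) : EReal)) atTop
      (𝓝 ((V : ℝ) : EReal)) := by
    have h0 : Tendsto (fun k : ℕ => 1/((k:ℝ)+1) + V) atTop (𝓝 (0 + V)) :=
      tendsto_one_div_add_atTop_nhds_zero_nat.add tendsto_const_nhds
    rw [zero_add] at h0
    exact (continuous_coe_real_ereal.tendsto _).comp h0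
  exact ge_of_tendsto' hVt hk
end
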